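/- arXiv:0902.0657 — 13 statements merged into one kernel-verified Lean document; each statement's English description precedes it below -/
import Mathlib

section
/- Let S be a finite nonempty index set. The set of points u ∈ [0,1]^S that satisfy, for every subset V ⊆ S of odd cardinality, the inequality Σ_{i∈V} u_i − Σ_{i∈S∖V} u_i ≤ |V| − 1, is exactly the convex hull of the set of binary vectors x ∈ {0,1}^S whose coordinate sum Σ_{i∈S} x_i is even. -/
open Finset

/-- Sum of a 0/1 vector over a finset equals the number of 1-coordinates there. -/
lemma sum_eq_card_filter {ι : Type} [Fintype ι] [DecidableEq ι]
    (x : ι → ℝ) (hx : ∀ i, x i = 0 ∨ x i = 1) (W : Finset ι) :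
    ∑ i ∈ W, x i = ((W.filter (fun i => x i = 1)).card : ℝ) := by
  rw [← Finset.sum_boole]
  refine Finset.sum_congr rfl fun i _ => ?_
  rcases hx i with h | h <;> simp [h]

/-- Even-weight binary vertices satisfy all odd-set parity inequalities. -/
lemma vertex_mem {ι : Type} [Fintype ι] [DecidableEq ι]
    (x : ι → ℝ) (hx : ∀ i, x i = 0 ∨ x i = 1)
    (hev : Even (Finset.univ.filter (fun i => x i = 1)).card)
    (V : Finset ι) (hV : Odd V.card) :
    ∑ i ∈ V, x i - ∑ i ∈ Vᶜ, x i ≤ (V.card : ℝ) - 1 := by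
  rw [sum_eq_card_filter x hx V, sum_eq_card_filter x hx Vᶜ]
  set p := fun i => x i = 1 with hp
  have hsplit : (V.filter p).card + (Vᶜ.filter p).card
      = (Finset.univ.filter p).card := by
    rw [← Finset.card_union_of_disjoint]
    · congr 1
      rw [← Finset.filter_union, Finset.union_compl]
    · exact Finset.disjoint_filter_filter (disjoint_compl_right)
  have hle : (V.filter p).card ≤ V.card := Finset.card_filter_le _ _
  rcases lt_or_eq_of_le hle with h | h
  · have hb : (0:ℝ) ≤ ((Vᶜ.filter p).card : ℝ) := by positivity
    have : ((V.filter p).card : ℝ) + 1 ≤ (V.card : ℝ) := by exact_mod_cast h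
    linarith
  · -- V ⊆ ones, so Vᶜ contains at least one 1 (parity)
    have hne : (Vᶜ.filter p).card ≠ 0 := by
      intro h0
      rw [h0, Nat.add_zero] at hsplit
      rw [h] at hsplit
      rw [← hsplit] at hev
      exact (Nat.not_even_iff_odd.mpr hV) hev
    have hb : (1:ℝ) ≤ ((Vᶜ.filter p).card : ℝ) := by
      exact_mod_cast Nat.one_le_iff_ne_zero.mpr hne
    have : ((V.filter p).card : ℝ) ≤ (V.card : ℝ) := by exact_mod_cast hle
    linarith

/-- Key LP bound: for every linear objective, some even vertex dominates any
point satisfying the parity inequalities. -/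
lemma key_bound {ι : Type} [Fintype ι] [DecidableEq ι] [Nonempty ι]
    (c u : ι → ℝ) (hu0 : ∀ i, 0 ≤ u i ∧ u i ≤ 1)
    (hcon : ∀ V : Finset ι, Odd V.card →
      ∑ i ∈ V, u i - ∑ i ∈ Vᶜ, u i ≤ (V.card : ℝ) - 1) :
    ∃ x : ι → ℝ, ((∀ i, x i = 0 ∨ x i = 1) ∧
      Even (Finset.univ.filter (fun i => x i = 1)).card) ∧
      ∑ i, c i * u i ≤ ∑ i, c i * x i := by
  classical
  set P : Finset ι := Finset.univ.filter (fun i => 0 < c i) with hP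
  -- generic facts about indicator vectors
  have indps : ∀ B : Finset ι,
      (∀ i, (if i ∈ B then (1:ℝ) else 0) = 0 ∨ (if i ∈ B then (1:ℝ) else 0) = 1) := by
    intro B i; by_cases h : i ∈ B <;> simp [h]
  have indfil : ∀ B : Finset ι,
      Finset.univ.filter (fun i => (if i ∈ B then (1:ℝ) else 0) = 1) = B := by
    intro B; ext i; by_cases h : i ∈ B <;> simp [h]
  have indsum : ∀ B : Finset ι,
      ∑ i, c i * (if i ∈ B then (1:ℝ) else 0) = ∑ i ∈ B, c i := by
    intro B
    rw [← Finset.sum_filter_add_sum_filter_not Finset.univ (fun i => i ∈ B)]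
    have h1 : ∀ i ∈ Finset.univ.filter (fun i => i ∈ B),
        c i * (if i ∈ B then (1:ℝ) else 0) = c i := by
      intro i hi; simp at hi; simp [hi]
    have h2 : ∀ i ∈ Finset.univ.filter (fun i => ¬ i ∈ B),
        c i * (if i ∈ B then (1:ℝ) else 0) = 0 := by
      intro i hi; simp at hi; simp [hi]
    rw [Finset.sum_congr rfl h1, Finset.sum_congr rfl h2, Finset.sum_const_zero,
      add_zero]
    congr 1
    ext i; simp
  -- bound on the positive part
  have hPpos : ∀ i ∈ P, 0 < c i := by intro i hi; simpa [hP] using hi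
  have hPcneg : ∀ i ∈ Pᶜ, c i ≤ 0 := by
    intro i hi
    have : ¬ (0 < c i) := by simpa [hP] using hi
    linarith
  rcases Nat.even_or_odd P.card with hpar | hpar
  · -- P itself is even: take x = indicator of P
    refine ⟨fun i => if i ∈ P then 1 else 0, ⟨indps P, by rw [indfil]; exact hpar⟩, ?_⟩
    rw [indsum]
    rw [← Finset.sum_add_sum_compl P (fun i => c i * u i)]
    have b1 : ∑ i ∈ P, c i * u i ≤ ∑ i ∈ P, c i := by
      refine Finset.sum_le_sum fun i hi => ?_
      have := hPpos i hi
      nlinarith [(hu0 i).2]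
    have b2 : ∑ i ∈ Pᶜ, c i * u i ≤ 0 := by
      refine Finset.sum_nonpos fun i hi => ?_
      exact mul_nonpos_of_nonpos_of_nonneg (hPcneg i hi) (hu0 i).1
    linarith
  · -- P odd: remove/add the coordinate with smallest |c|
    obtain ⟨t, -, ht⟩ := Finset.exists_min_image Finset.univ (fun i => |c i|)
      Finset.univ_nonempty
    have htmin : ∀ i, |c t| ≤ |c i| := fun i => ht i (Finset.mem_univ i)
    -- bound: ∑ c u ≤ ∑_P c - |c t|
    have hcons := hcon P hpar
    have hslack : (1:ℝ) ≤ (∑ i ∈ P, (1 - u i)) + ∑ i ∈ Pᶜ, u i := by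
      have : ∑ i ∈ P, (1 - u i) = (P.card : ℝ) - ∑ i ∈ P, u i := by
        rw [Finset.sum_sub_distrib, Finset.sum_const, nsmul_eq_mul, mul_one]
      rw [this]; linarith
    have b1 : ∑ i ∈ P, c i * u i ≤ ∑ i ∈ P, (c i - |c t| * (1 - u i)) := by
      refine Finset.sum_le_sum fun i hi => ?_
      have h1 := hPpos i hi
      have h2 : |c t| ≤ c i := le_trans (htmin i) (le_of_eq (abs_of_pos h1))
      nlinarith [(hu0 i).2]
    have b2 : ∑ i ∈ Pᶜ, c i * u i ≤ ∑ i ∈ Pᶜ, (-(|c t| * u i)) := by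
      refine Finset.sum_le_sum fun i hi => ?_
      have h1 := hPcneg i hi
      have h2 : c i ≤ -|c t| := by
        have := htmin i
        rw [abs_of_nonpos h1] at this
        linarith
      nlinarith [(hu0 i).1]
    have bmain : ∑ i, c i * u i ≤ (∑ i ∈ P, c i) - |c t| := by
      rw [← Finset.sum_add_sum_compl P (fun i => c i * u i)]
      have e1 : ∑ i ∈ P, (c i - |c t| * (1 - u i))
          = (∑ i ∈ P, c i) - |c t| * ∑ i ∈ P, (1 - u i) := by
        rw [Finset.sum_sub_distrib, Finset.mul_sum]
      have e2 : ∑ i ∈ Pᶜ, (-(|c t| * u i)) = -(|c t| * ∑ i ∈ Pᶜ, u i) := by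
        rw [Finset.mul_sum, ← Finset.sum_neg_distrib]
      have habs : (0:ℝ) ≤ |c t| := abs_nonneg _
      nlinarith [b1, b2, e1, e2, hslack]
    by_cases htP : t ∈ P
    · refine ⟨fun i => if i ∈ P.erase t then 1 else 0,
        ⟨indps _, ?_⟩, ?_⟩
      · rw [indfil, Finset.card_erase_of_mem htP]
        exact Nat.Odd.sub_odd hpar odd_one
      · rw [indsum]
        have : ∑ i ∈ P.erase t, c i = (∑ i ∈ P, c i) - c t := by
          rw [Finset.sum_erase_eq_sub htP]
        rw [this]
        have : c t = |c t| := (abs_of_pos (hPpos t htP)).symm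
        linarith
    · refine ⟨fun i => if i ∈ insert t P then 1 else 0,
        ⟨indps _, ?_⟩, ?_⟩
      · rw [indfil, Finset.card_insert_of_notMem htP]
        simpa [Nat.even_add_one] using hpar
      · rw [indsum, Finset.sum_insert htP]
        have hct : c t ≤ 0 := by
          have : ¬ (0 < c t) := by
            intro h; exact htP (by simp [hP, h])
          linarith
        have : c t = -|c t| := by rw [abs_of_nonpos hct]; ring
        linarith

/-- For a finite nonempty index set, the set of points `u ∈ [0,1]^S`
satisfying every odd-cardinality parity inequality
`∑_{i∈V} u_i - ∑_{i∈S∖V} u_i ≤ |V| - 1` is exactly the convex hull of the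
even-weight binary vectors. -/
theorem stmt_0 (ι : Type) [Fintype ι] [DecidableEq ι] [Nonempty ι] :
    {u : ι → ℝ | (∀ i, 0 ≤ u i ∧ u i ≤ 1) ∧
      ∀ V : Finset ι, Odd V.card →
        ∑ i ∈ V, u i - ∑ i ∈ Vᶜ, u i ≤ (V.card : ℝ) - 1} =
    convexHull ℝ {x : ι → ℝ | (∀ i, x i = 0 ∨ x i = 1) ∧
      Even (Finset.univ.filter (fun i => x i = 1)).card} := by
  classical
  set E : Set (ι → ℝ) := {x : ι → ℝ | (∀ i, x i = 0 ∨ x i = 1) ∧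
      Even (Finset.univ.filter (fun i => x i = 1)).card} with hE
  set K : Set (ι → ℝ) := {u : ι → ℝ | (∀ i, 0 ≤ u i ∧ u i ≤ 1) ∧
      ∀ V : Finset ι, Odd V.card →
        ∑ i ∈ V, u i - ∑ i ∈ Vᶜ, u i ≤ (V.card : ℝ) - 1} with hK
  have hEfin : E.Finite := by
    have : E ⊆ Set.pi Set.univ (fun _ : ι => ({0, 1} : Set ℝ)) := by
      intro x hx i _
      rcases hx.1 i with h | h <;> simp [h]
    exact Set.Finite.subset (Set.Finite.pi fun _ => (Set.finite_singleton (1:ℝ)).insert 0) this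
  have hEK : E ⊆ K := by
    rintro x ⟨hx01, hxev⟩
    refine ⟨fun i => ?_, fun V hV => vertex_mem x hx01 hxev V hV⟩
    rcases hx01 i with h | h <;> simp [h]
  have hKconv : Convex ℝ K := by
    rintro x ⟨hx1, hx2⟩ y ⟨hy1, hy2⟩ a b ha hb hab
    constructor
    · intro i
      simp only [Pi.add_apply, Pi.smul_apply, smul_eq_mul]
      constructor
      · have g1 := (hx1 i).1; have g2 := (hy1 i).1
        nlinarith
      · have h1 := (hx1 i).2; have h2 := (hy1 i).2
        nlinarith
    · intro V hV
      have e1 : ∀ W : Finset ι, ∑ i ∈ W, (a • x + b • y) i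
          = a * ∑ i ∈ W, x i + b * ∑ i ∈ W, y i := by
        intro W
        simp only [Pi.add_apply, Pi.smul_apply, smul_eq_mul]
        rw [Finset.sum_add_distrib, Finset.mul_sum, Finset.mul_sum]
      rw [e1, e1]
      have h1 := hx2 V hV
      have h2 := hy2 V hV
      nlinarith [mul_le_mul_of_nonneg_left h1 ha, mul_le_mul_of_nonneg_left h2 hb]
  apply Set.Subset.antisymm
  · -- hard direction: via separation
    intro u hu
    by_contra hnot
    obtain ⟨f, s, hfs, hsu⟩ := geometric_hahn_banach_closed_point
      (convex_convexHull ℝ E) (hEfin.isClosed_convexHull ℝ) hnot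
    set c : ι → ℝ := fun i => f (fun j => if i = j then 1 else 0) with hc
    have feval : ∀ v : ι → ℝ, f v = ∑ i, c i * v i := by
      intro v
      conv_lhs => rw [pi_eq_sum_univ v]
      rw [map_sum]
      refine Finset.sum_congr rfl fun i _ => ?_
      rw [map_smul, smul_eq_mul, mul_comm]
    obtain ⟨x, hxE, hxb⟩ := key_bound c u hu.1 hu.2
    have hx : x ∈ convexHull ℝ E := subset_convexHull ℝ E hxE
    have := hfs x hx
    rw [feval x, feval u] at *
    linarith [hfs x hx, hsu]
  · exact convexHull_min hEK hKconv
end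

section
/- Let H ∈ {0,1}^{m×n} and let j be a row index with support N(j). A binary vector u ∈ {0,1}^n satisfies the parity inequality associated with (j,V) for every odd-cardinality subset V ⊆ N(j) if and only if Σ_{i∈N(j)} u_i is even. -/
/-- Support of row `j` of a binary matrix `H`. -/
def supp {m n : ℕ} (H : Fin m → Fin n → Bool) (j : Fin m) : Finset (Fin n) :=
  Finset.univ.filter (fun i => H j i)

/-- Left-hand side of the parity inequality associated with `(j, V)` at `u`. -/
def LHS {m n : ℕ} (H : Fin m → Fin n → Bool) (j : Fin m) (V : Finset (Fin n))
    (u : Fin n → ℝ) : ℝ :=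
  ∑ i ∈ V, (1 - u i) + ∑ i ∈ supp H j \ V, u i

private lemma sum_binary {n : ℕ} (u : Fin n → ℝ) (hu : ∀ i, u i = 0 ∨ u i = 1)
    (A : Finset (Fin n)) :
    ∑ i ∈ A, u i = ((A.filter (fun i => u i = 1)).card : ℝ) := by
  rw [← Finset.sum_filter_add_sum_filter_not A (fun i => u i = 1)]
  have h1 : ∑ i ∈ A.filter (fun i => u i = 1), u i
      = ((A.filter (fun i => u i = 1)).card : ℝ) := by
    rw [Finset.sum_congr rfl (fun i hi => (Finset.mem_filter.1 hi).2),
      Finset.sum_const, nsmul_eq_mul, mul_one]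
  have h2 : ∑ i ∈ A.filter (fun i => ¬ u i = 1), u i = 0 := by
    apply Finset.sum_eq_zero
    intro i hi
    rcases hu i with h | h
    · exact h
    · exact absurd h (Finset.mem_filter.1 hi).2
  rw [h1, h2, add_zero]

/-- a binary vector `u` satisfies all parity inequalities of row `j`
iff the number of ones of `u` on the support of row `j` is even. -/
theorem stmt_1 (m n : ℕ) (H : Fin m → Fin n → Bool) (j : Fin m)
    (u : Fin n → ℝ) (hu : ∀ i, u i = 0 ∨ u i = 1) :
    (∀ V : Finset (Fin n), V ⊆ supp H j → Odd V.card → 1 ≤ LHS H j V u) ↔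
      Even ((supp H j).filter (fun i => u i = 1)).card := by
  set T : Finset (Fin n) := (supp H j).filter (fun i => u i = 1) with hT
  constructor
  · intro hall
    by_contra hodd
    rw [Nat.not_even_iff_odd] at hodd
    have hsub : T ⊆ supp H j := Finset.filter_subset _ _
    have h := hall T hsub hodd
    have hz : LHS H j T u = 0 := by
      unfold LHS
      have h1 : ∑ i ∈ T, (1 - u i) = 0 := by
        apply Finset.sum_eq_zero
        intro i hi
        have : u i = 1 := (Finset.mem_filter.1 hi).2
        rw [this]; ring
      have h2 : ∑ i ∈ supp H j \ T, u i = 0 := by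
        apply Finset.sum_eq_zero
        intro i hi
        rcases hu i with h | h
        · exact h
        · exact absurd (Finset.mem_filter.2 ⟨(Finset.mem_sdiff.1 hi).1, h⟩)
            (Finset.mem_sdiff.1 hi).2
      rw [h1, h2, add_zero]
    rw [hz] at h
    linarith
  · intro heven V hV hodd
    -- compute LHS = |V| + |T| - 2 |V ∩ T|
    have hVT : V.filter (fun i => u i = 1) = V ∩ T := by
      ext i
      simp only [Finset.mem_filter, Finset.mem_inter, hT]
      exact ⟨fun ⟨h1, h2⟩ => ⟨h1, hV h1, h2⟩, fun ⟨h1, _, h3⟩ => ⟨h1, h3⟩⟩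
    have hST : (supp H j \ V).filter (fun i => u i = 1) = T \ (V ∩ T) := by
      ext i
      simp only [Finset.mem_filter, Finset.mem_sdiff, Finset.mem_inter, hT]
      tauto
    have hcard : LHS H j V u
        = (V.card : ℝ) + T.card - 2 * (V ∩ T).card := by
      unfold LHS
      rw [Finset.sum_sub_distrib, Finset.sum_const, sum_binary u hu,
        sum_binary u hu, hVT, hST, nsmul_eq_mul, mul_one,
        Finset.card_sdiff_of_subset (Finset.inter_subset_right)]
      have hle : (V ∩ T).card ≤ T.card := Finset.card_le_card Finset.inter_subset_right
      push_cast [hle]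
      ring
    rw [hcard]
    have h1 : (V ∩ T).card ≤ V.card := Finset.card_le_card Finset.inter_subset_left
    have h2 : (V ∩ T).card ≤ T.card := Finset.card_le_card Finset.inter_subset_right
    have hne : V.card + T.card ≠ 2 * (V ∩ T).card := by
      intro hc
      have : Even (V.card + T.card) := ⟨(V ∩ T).card, by omega⟩
      rw [Nat.even_add] at this
      rcases this with ⟨_, h3⟩
      exact (Nat.not_even_iff_odd.2 hodd) (h3 heven)
    have : 2 * (V ∩ T).card + 1 ≤ V.card + T.card := by omega
    have := (Nat.cast_le (α := ℝ)).2 this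
    push_cast at this
    linarith
end

section
/- Let H ∈ {0,1}^{m×n}. A binary vector u ∈ {0,1}^n belongs to the fundamental polytope P(H) if and only if Hu ≡ 0 (mod 2), i.e., if and only if u is a codeword of the binary linear code defined by H. In particular, the integral points of P(H) are exactly the codewords. -/
/-- The fundamental polytope `P(H)`: all `u ∈ [0,1]^n` satisfying every parity
inequality of `H`. -/
def fundamentalPolytope {m n : ℕ} (H : Fin m → Fin n → Bool) : Set (Fin n → ℝ) :=
  {u | (∀ i, 0 ≤ u i ∧ u i ≤ 1) ∧
    ∀ j, ∀ V : Finset (Fin n), V ⊆ supp H j → Odd V.card → 1 ≤ LHS H j V u}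

/-- a binary vector `u` belongs to the fundamental polytope `P(H)`
iff `H u ≡ 0 (mod 2)`, i.e. iff `u` is a codeword of the binary linear code
defined by `H` (on each row the number of ones of `u` is even). -/
theorem stmt_2 (m n : ℕ) (H : Fin m → Fin n → Bool)
    (u : Fin n → ℝ) (hu : ∀ i, u i = 0 ∨ u i = 1) :
    u ∈ fundamentalPolytope H ↔
      ∀ j, Even ((supp H j).filter (fun i => u i = 1)).card := by
  constructor
  · intro hmem j
    by_contra hodd
    rw [Nat.not_even_iff_odd] at hodd
    set V := (supp H j).filter (fun i => u i = 1) with hV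
    have hsub : V ⊆ supp H j := Finset.filter_subset _ _
    have h1 := hmem.2 j V hsub hodd
    have hz : LHS H j V u = 0 := by
      unfold LHS
      have e1 : ∑ i ∈ V, (1 - u i) = 0 := by
        apply Finset.sum_eq_zero
        intro i hi
        have : u i = 1 := (Finset.mem_filter.mp hi).2
        simp [this]
      have e2 : ∑ i ∈ supp H j \ V, u i = 0 := by
        apply Finset.sum_eq_zero
        intro i hi
        rcases Finset.mem_sdiff.mp hi with ⟨hs, hns⟩
        rcases hu i with h0 | h1'
        · exact h0
        · exact absurd (Finset.mem_filter.mpr ⟨hs, h1'⟩) hns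
      rw [e1, e2, add_zero]
    rw [hz] at h1
    linarith
  · intro heven
    refine ⟨fun i => ?_, fun j V hsub hodd => ?_⟩
    · rcases hu i with h | h <;> simp [h]
    · set A := (supp H j).filter (fun i => u i = 1) with hA
      have hne : V ≠ A := by
        intro h
        have h2 := heven j
        rw [← hA, ← h] at h2
        exact (Nat.not_even_iff_odd.mpr hodd) h2
      have hn1 : ∀ i ∈ V, (0:ℝ) ≤ 1 - u i := by
        intro i _
        rcases hu i with h | h <;> simp [h]
      have hn2 : ∀ i ∈ supp H j \ V, (0:ℝ) ≤ u i := by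
        intro i _
        rcases hu i with h | h <;> simp [h]
      have : (∃ i ∈ V, i ∉ A) ∨ (∃ i ∈ A, i ∉ V) := by
        by_contra hc
        push_neg at hc
        exact hne (Finset.Subset.antisymm hc.1 hc.2)
      unfold LHS
      rcases this with ⟨i, hiV, hiA⟩ | ⟨i, hiA, hiV⟩
      · have hui : u i = 0 := by
          rcases hu i with h | h
          · exact h
          · exact absurd (Finset.mem_filter.mpr ⟨hsub hiV, h⟩) hiA
        have h1 : (1:ℝ) ≤ ∑ i ∈ V, (1 - u i) := by
          calc (1:ℝ) = 1 - u i := by rw [hui]; ring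
          _ ≤ _ := Finset.single_le_sum hn1 hiV
        have h2 : (0:ℝ) ≤ ∑ i ∈ supp H j \ V, u i := Finset.sum_nonneg hn2
        linarith
      · have hui : u i = 1 := (Finset.mem_filter.mp hiA).2
        have hmem : i ∈ supp H j \ V :=
          Finset.mem_sdiff.mpr ⟨(Finset.mem_filter.mp hiA).1, hiV⟩
        have h2 : (1:ℝ) ≤ ∑ i ∈ supp H j \ V, u i := by
          calc (1:ℝ) = u i := hui.symm
          _ ≤ _ := Finset.single_le_sum hn2 hmem
        have h1 : (0:ℝ) ≤ ∑ i ∈ V, (1 - u i) := Finset.sum_nonneg hn1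
        linarith
end

section
/- Let H ∈ {0,1}^{m×n}, let j be a row index, and let u ∈ [0,1]^n. If for some odd-cardinality subset V ⊆ N(j) the parity inequality associated with (j,V) is violated at u (i.e., LHS_{j,V}(u) < 1), then for every other odd-cardinality subset V' ⊆ N(j) with V' ≠ V, the parity inequality associated with (j,V') is satisfied with strict inequality at u (i.e., LHS_{j,V'}(u) > 1). -/
lemma LHS_eq {m n : ℕ} (H : Fin m → Fin n → Bool) (j : Fin m)
    (V : Finset (Fin n)) (u : Fin n → ℝ) (hV : V ⊆ supp H j) :
    LHS H j V u = ∑ i ∈ supp H j, (if i ∈ V then 1 - u i else u i) := by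
  rw [LHS, ← Finset.sum_filter_add_sum_filter_not (supp H j) (· ∈ V)]
  congr 1
  · rw [Finset.filter_mem_eq_inter, Finset.inter_eq_right.mpr hV]
    exact (Finset.sum_ite_of_true (fun i hi => hi) _ _).symm
  · rw [Finset.sdiff_eq_filter]
    exact (Finset.sum_ite_of_false (fun i hi => (Finset.mem_filter.mp hi).2) _ _).symm

/-- if one parity inequality of row `j` is violated at
`u ∈ [0,1]^n`, every other parity inequality of row `j` is satisfied with
strict inequality at `u`. -/
theorem stmt_3 (m n : ℕ) (H : Fin m → Fin n → Bool) (j : Fin m)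
    (u : Fin n → ℝ) (hu : ∀ i, 0 ≤ u i ∧ u i ≤ 1)
    (V : Finset (Fin n)) (hVsub : V ⊆ supp H j) (hVodd : Odd V.card)
    (hviol : LHS H j V u < 1) :
    ∀ V' : Finset (Fin n), V' ⊆ supp H j → Odd V'.card → V' ≠ V →
      1 < LHS H j V' u := by
  intro V' hV'sub hV'odd hne
  set S := supp H j with hS
  -- symmetric difference
  set D := (V \ V') ∪ (V' \ V) with hD
  have hDsub : D ⊆ S := by
    intro i hi
    rcases Finset.mem_union.mp hi with h | h
    · exact hVsub (Finset.mem_sdiff.mp h).1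
    · exact hV'sub (Finset.mem_sdiff.mp h).1
  have hDcard : D.card = (V \ V').card + (V' \ V).card := by
    apply Finset.card_union_of_disjoint
    exact disjoint_sdiff_sdiff
  have h1 : (V \ V').card + (V ∩ V').card = V.card :=
    Finset.card_sdiff_add_card_inter V V'
  have h2 : (V' \ V).card + (V' ∩ V).card = V'.card :=
    Finset.card_sdiff_add_card_inter V' V
  have hDeven : Even D.card := by
    have hv := Nat.odd_iff.mp hVodd
    have hv' := Nat.odd_iff.mp hV'odd
    rw [Finset.inter_comm] at h2
    rw [Nat.even_iff, hDcard]
    omega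
  have hDne : D.Nonempty := by
    rw [Finset.nonempty_iff_ne_empty]
    intro h
    apply hne
    have h1 : V' \ V = ∅ := Finset.union_eq_empty.mp h |>.2
    have h2 : V \ V' = ∅ := Finset.union_eq_empty.mp h |>.1
    exact Finset.Subset.antisymm (Finset.sdiff_eq_empty_iff_subset.mp h1)
      (Finset.sdiff_eq_empty_iff_subset.mp h2)
  have hD2 : 2 ≤ D.card := by
    rcases hDeven with ⟨k, hk⟩
    have : 1 ≤ D.card := Finset.card_pos.mpr hDne
    omega
  -- key sum inequality
  have key : (D.card : ℝ) ≤ LHS H j V u + LHS H j V' u := by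
    rw [LHS_eq H j V u hVsub, LHS_eq H j V' u hV'sub, ← Finset.sum_add_distrib]
    have : (D.card : ℝ) = ∑ i ∈ S, (if i ∈ D then (1:ℝ) else 0) := by
      rw [Finset.sum_ite_mem, Finset.inter_eq_right.mpr hDsub, Finset.sum_const,
        nsmul_eq_mul, mul_one]
    rw [this]
    apply Finset.sum_le_sum
    intro i _
    rcases hu i with ⟨h0, h1⟩
    by_cases hiD : i ∈ D
    · simp only [hiD, if_pos]
      rcases Finset.mem_union.mp hiD with h | h
      · rcases Finset.mem_sdiff.mp h with ⟨hv, hv'⟩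
        simp [hv, hv']
      · rcases Finset.mem_sdiff.mp h with ⟨hv', hv⟩
        simp [hv, hv']
    · simp only [hiD, if_neg, not_false_iff]
      have : i ∈ V ↔ i ∈ V' := by
        constructor <;> intro h <;> by_contra hc
        · exact hiD (Finset.mem_union_left _ (Finset.mem_sdiff.mpr ⟨h, hc⟩))
        · exact hiD (Finset.mem_union_right _ (Finset.mem_sdiff.mpr ⟨h, hc⟩))
      by_cases hv : i ∈ V
      · have hv' : i ∈ V' := this.mp hv
        simp only [hv, hv', if_pos]; linarith
      · have hv' : i ∉ V' := fun h => hv (this.mpr h)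
        simp only [hv, hv', if_neg, not_false_iff]; linarith
  have : (2 : ℝ) ≤ LHS H j V u + LHS H j V' u := by
    calc (2:ℝ) ≤ (D.card : ℝ) := by exact_mod_cast hD2
    _ ≤ _ := key
  linarith
end

section
/- Let H ∈ {0,1}^{m×n} and u ∈ [0,1]^n. For each row index j, at most one pair (j,V) with V ⊆ N(j) of odd cardinality has its parity inequality violated at u. Consequently, the total number of parity inequalities of H that are violated at u is at most m. -/
/-- for `u ∈ [0,1]^n`, each row `j` has at most one violated
parity inequality, and hence the total number of parity inequalities of `H`
violated at `u` is at most `m`. -/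
theorem stmt_4 (m n : ℕ) (H : Fin m → Fin n → Bool)
    (u : Fin n → ℝ) (hu : ∀ i, 0 ≤ u i ∧ u i ≤ 1) :
    (∀ j : Fin m,
      ((supp H j).powerset.filter
        (fun V => Odd V.card ∧ LHS H j V u < 1)).card ≤ 1) ∧
    ∑ j : Fin m, ((supp H j).powerset.filter
        (fun V => Odd V.card ∧ LHS H j V u < 1)).card ≤ m := by
  have key : ∀ j : Fin m,
      ((supp H j).powerset.filter
        (fun V => Odd V.card ∧ LHS H j V u < 1)).card ≤ 1 := by
    intro j
    apply Finset.card_le_one.mpr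
    intro V₁ h₁ V₂ h₂
    simp only [Finset.mem_filter, Finset.mem_powerset] at h₁ h₂
    obtain ⟨hs₁, ho₁, hl₁⟩ := h₁
    obtain ⟨hs₂, ho₂, hl₂⟩ := h₂
    by_contra hne
    have hd : ∀ i : Fin n, 0 ≤ 1 - u i := fun i => by linarith [(hu i).2]
    have b1 : (∑ i ∈ V₁ \ V₂, (1 - u i)) + ∑ i ∈ V₂ \ V₁, u i ≤ LHS H j V₁ u := by
      unfold LHS
      refine add_le_add ?_ ?_
      · exact Finset.sum_le_sum_of_subset_of_nonneg Finset.sdiff_subset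
          (fun i _ _ => hd i)
      · exact Finset.sum_le_sum_of_subset_of_nonneg
          (Finset.sdiff_subset_sdiff hs₂ (Finset.Subset.refl _))
          (fun i _ _ => (hu i).1)
    have b2 : (∑ i ∈ V₂ \ V₁, (1 - u i)) + ∑ i ∈ V₁ \ V₂, u i ≤ LHS H j V₂ u := by
      unfold LHS
      refine add_le_add ?_ ?_
      · exact Finset.sum_le_sum_of_subset_of_nonneg Finset.sdiff_subset
          (fun i _ _ => hd i)
      · exact Finset.sum_le_sum_of_subset_of_nonneg
          (Finset.sdiff_subset_sdiff hs₁ (Finset.Subset.refl _))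
          (fun i _ _ => (hu i).1)
    have e1 : (∑ i ∈ V₁ \ V₂, (1 - u i)) + ∑ i ∈ V₁ \ V₂, u i
        = ((V₁ \ V₂).card : ℝ) := by
      rw [← Finset.sum_add_distrib]
      simp
    have e2 : (∑ i ∈ V₂ \ V₁, (1 - u i)) + ∑ i ∈ V₂ \ V₁, u i
        = ((V₂ \ V₁).card : ℝ) := by
      rw [← Finset.sum_add_distrib]
      simp
    have hcard : 2 ≤ (V₁ \ V₂).card + (V₂ \ V₁).card := by
      have i1 : (V₁ \ V₂).card + (V₁ ∩ V₂).card = V₁.card :=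
        Finset.card_sdiff_add_card_inter V₁ V₂
      have i2 : (V₂ \ V₁).card + (V₂ ∩ V₁).card = V₂.card :=
        Finset.card_sdiff_add_card_inter V₂ V₁
      have i3 : (V₂ ∩ V₁).card = (V₁ ∩ V₂).card := by rw [Finset.inter_comm]
      have hpos : 0 < (V₁ \ V₂).card + (V₂ \ V₁).card := by
        by_contra hz
        push_neg at hz
        have h10 : V₁ \ V₂ = ∅ := Finset.card_eq_zero.mp (by omega)
        have h20 : V₂ \ V₁ = ∅ := Finset.card_eq_zero.mp (by omega)
        exact hne (Finset.Subset.antisymm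
          (Finset.sdiff_eq_empty_iff_subset.mp h10)
          (Finset.sdiff_eq_empty_iff_subset.mp h20))
      obtain ⟨k₁, hk₁⟩ := ho₁
      obtain ⟨k₂, hk₂⟩ := ho₂
      omega
    have hcR : (2 : ℝ) ≤ ((V₁ \ V₂).card : ℝ) + ((V₂ \ V₁).card : ℝ) := by
      exact_mod_cast hcard
    linarith
  refine ⟨key, ?_⟩
  calc ∑ j : Fin m, ((supp H j).powerset.filter
        (fun V => Odd V.card ∧ LHS H j V u < 1)).card
      ≤ ∑ _j : Fin m, 1 := Finset.sum_le_sum (fun j _ => key j)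
    _ = m := by simp
end

section
/- Let H ∈ {0,1}^{m×n}, let j be a row index, and let x⁰ ∈ [0,1]^n. If for some odd-cardinality subset V ⊆ N(j) the parity inequality associated with (j,V) is active at x⁰ (i.e., LHS_{j,V}(x⁰) = 1), then for every odd-cardinality subset V' ⊆ N(j) the parity inequality associated with (j,V') is satisfied at x⁰ (i.e., LHS_{j,V'}(x⁰) ≥ 1). -/
lemma LHS_repr {m n : ℕ} (H : Fin m → Fin n → Bool) (j : Fin m)
    (W : Finset (Fin n)) (hW : W ⊆ supp H j) (u : Fin n → ℝ) :
    LHS H j W u = ∑ i ∈ supp H j, (if i ∈ W then 1 - u i else u i) := by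
  rw [LHS, ← Finset.union_sdiff_of_subset hW, Finset.sum_union Finset.disjoint_sdiff]
  congr 1
  · exact Finset.sum_congr rfl (fun i hi => by simp [hi])
  · rw [Finset.union_sdiff_of_subset hW]
    exact Finset.sum_congr rfl (fun i hi => by
      simp [(Finset.mem_sdiff.mp hi).2])

/-- if some parity inequality of row `j` is active at
`x⁰ ∈ [0,1]^n`, then all parity inequalities of row `j` are satisfied at `x⁰`. -/
theorem stmt_5 (m n : ℕ) (H : Fin m → Fin n → Bool) (j : Fin m)
    (x0 : Fin n → ℝ) (hx0 : ∀ i, 0 ≤ x0 i ∧ x0 i ≤ 1)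
    (V : Finset (Fin n)) (hVsub : V ⊆ supp H j) (hVodd : Odd V.card)
    (hactive : LHS H j V x0 = 1) :
    ∀ V' : Finset (Fin n), V' ⊆ supp H j → Odd V'.card →
      1 ≤ LHS H j V' x0 := by
  intro V' hV'sub hV'odd
  by_cases hVV : V' = V
  · rw [hVV, hactive]
  -- symmetric difference
  set T : Finset (Fin n) := (V \ V') ∪ (V' \ V) with hT
  have hTsub : T ⊆ supp H j := by
    apply Finset.union_subset <;> intro i hi <;>
      [exact hVsub (Finset.mem_sdiff.mp hi).1; exact hV'sub (Finset.mem_sdiff.mp hi).1]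
  -- T has even, nonzero cardinality, hence ≥ 2
  have hcard : 2 ≤ T.card := by
    have hdisj : Disjoint (V \ V') (V' \ V) := by
      apply Finset.disjoint_left.mpr
      intro a ha hb
      exact (Finset.mem_sdiff.mp hb).2 (Finset.mem_sdiff.mp ha).1
    have hTc : T.card = (V \ V').card + (V' \ V).card := Finset.card_union_of_disjoint hdisj
    have h1 : (V \ V').card + (V ∩ V').card = V.card := Finset.card_sdiff_add_card_inter V V'
    have h2 : (V' \ V).card + (V' ∩ V).card = V'.card := Finset.card_sdiff_add_card_inter V' V
    have hic : (V ∩ V').card = (V' ∩ V).card := by rw [Finset.inter_comm]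
    have hne : T.card ≠ 0 := by
      intro h
      rw [Finset.card_eq_zero, hT] at h
      have h1 : V \ V' = ∅ := (Finset.union_eq_empty.mp h).1
      have h2 : V' \ V = ∅ := (Finset.union_eq_empty.mp h).2
      exact hVV (Finset.Subset.antisymm (Finset.sdiff_eq_empty_iff_subset.mp h2)
        (Finset.sdiff_eq_empty_iff_subset.mp h1))
    obtain ⟨a, ha⟩ := hVodd
    obtain ⟨b, hb⟩ := hV'odd
    omega
  -- pointwise bound
  have hpt : ∀ i ∈ supp H j,
      (if i ∈ T then (1:ℝ) else 0) ≤
        (if i ∈ V then 1 - x0 i else x0 i) + (if i ∈ V' then 1 - x0 i else x0 i) := by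
    intro i _
    have h0 := (hx0 i).1
    have h1 := (hx0 i).2
    have hTm : i ∈ T ↔ (i ∈ V ∧ i ∉ V') ∨ (i ∈ V' ∧ i ∉ V) := by
      simp [hT, Finset.mem_union, Finset.mem_sdiff, and_comm]
    by_cases hv : i ∈ V <;> by_cases hv' : i ∈ V' <;>
      simp [hv, hv', hTm] <;> linarith
  have hsum : (T.card : ℝ) ≤ LHS H j V x0 + LHS H j V' x0 := by
    rw [LHS_repr H j V hVsub, LHS_repr H j V' hV'sub, ← Finset.sum_add_distrib]
    calc (T.card : ℝ) = ∑ i ∈ supp H j, (if i ∈ T then (1:ℝ) else 0) := by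
          rw [Finset.sum_ite_mem, Finset.inter_eq_right.mpr hTsub, Finset.sum_const,
            nsmul_eq_mul, mul_one]
      _ ≤ _ := Finset.sum_le_sum hpt
  have : (2:ℝ) ≤ (T.card : ℝ) := by exact_mod_cast hcard
  linarith [hactive ▸ hsum]
end

section
/- Let H ∈ {0,1}^{m×n}, let j be a row index with N(j) nonempty, and let u ∈ [0,1]^n. Define S = {i ∈ N(j) : u_i > 1/2}. If |S| is odd, set V = S; otherwise let i* be any element of N(j) minimizing |u_i − 1/2| over i ∈ N(j), and set V = S ∖ {i*} if i* ∈ S and V = S ∪ {i*} if i* ∉ S. Then V has odd cardinality, and for every odd-cardinality subset V' ⊆ N(j) one has LHS_{j,V}(u) ≤ LHS_{j,V'}(u). In particular, some parity inequality of row j is violated at u if and only if LHS_{j,V}(u) < 1. -/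
/-- correctness of Algorithm 2.  With `S = {i ∈ N(j) : u_i > 1/2}`,
and `V = S` if `|S|` is odd, otherwise `V` obtained from `S` by adding/removing
an element `i*` of `N(j)` whose value is closest to `1/2`, the set `V` has odd
cardinality and minimizes `LHS_{j,·}(u)` over all odd-cardinality subsets of
`N(j)`; consequently row `j` has a violated parity inequality at `u` iff
`LHS_{j,V}(u) < 1`. -/
theorem stmt_6 (m n : ℕ) (H : Fin m → Fin n → Bool) (j : Fin m)
    (u : Fin n → ℝ) (hu : ∀ i, 0 ≤ u i ∧ u i ≤ 1)
    (hne : (supp H j).Nonempty)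
    (istar : Fin n) (histar : istar ∈ supp H j)
    (hmin : ∀ i ∈ supp H j, |u istar - 1/2| ≤ |u i - 1/2|)
    (S : Finset (Fin n)) (hS : S = (supp H j).filter (fun i => 1/2 < u i))
    (V : Finset (Fin n))
    (hV : V = if Odd S.card then S
              else (if istar ∈ S then S.erase istar else insert istar S)) :
    Odd V.card ∧
    (∀ V' : Finset (Fin n), V' ⊆ supp H j → Odd V'.card →
      LHS H j V u ≤ LHS H j V' u) ∧
    ((∃ V' : Finset (Fin n), V' ⊆ supp H j ∧ Odd V'.card ∧ LHS H j V' u < 1) ↔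
      LHS H j V u < 1) := by
    classical
  set c : Fin n → ℝ := fun i => 1 - 2 * u i with hc
  have hSsub : S ⊆ supp H j := by rw [hS]; exact Finset.filter_subset _ _
  have hcneg : ∀ i ∈ S, c i ≤ 0 := by
    intro i hi
    rw [hS, Finset.mem_filter] at hi
    simp only [hc]; linarith [hi.2]
  have hcpos : ∀ i ∈ supp H j, i ∉ S → 0 ≤ c i := by
    intro i hi hni
    rw [hS, Finset.mem_filter] at hni
    push_neg at hni
    have := hni hi
    simp only [hc]; linarith
  have habs : ∀ i, |c i| = 2 * |u i - 1/2| := by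
    intro i
    rw [show c i = -2 * (u i - 1/2) by simp only [hc]; ring, abs_mul]
    norm_num
  have hVsub : V ⊆ supp H j := by
    rw [hV]
    split_ifs with h1 h2
    · exact hSsub
    · exact (Finset.erase_subset _ _).trans hSsub
    · exact Finset.insert_subset histar hSsub
  have hVodd : Odd V.card := by
    rw [hV]
    split_ifs with h1 h2
    · exact h1
    · rw [Finset.card_erase_of_mem h2]
      have hpos : 0 < S.card := Finset.card_pos.mpr ⟨istar, h2⟩
      rw [Nat.odd_iff] at h1 ⊢
      omega
    · rw [Finset.card_insert_of_notMem h2]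
      rw [Nat.odd_iff] at h1 ⊢
      omega
  -- key reformulation of LHS
  have key : ∀ W : Finset (Fin n), W ⊆ supp H j →
      LHS H j W u = (∑ i ∈ supp H j, u i) + ∑ i ∈ W, c i := by
    intro W hW
    unfold LHS
    rw [Finset.sum_sdiff_eq_sub hW]
    have : ∑ i ∈ W, c i = ∑ i ∈ W, (1 - u i) - ∑ i ∈ W, u i := by
      rw [← Finset.sum_sub_distrib]
      exact Finset.sum_congr rfl fun i _ => by simp only [hc]; ring
    rw [this]; ring
  -- decomposition of sums relative to S
  have decomp : ∀ W : Finset (Fin n), W ⊆ supp H j →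
      ∑ i ∈ W, c i = ∑ i ∈ S, c i + (∑ i ∈ W \ S, |c i| + ∑ i ∈ S \ W, |c i|) := by
    intro W hW
    have h1 : ∑ i ∈ W ∩ S, c i + ∑ i ∈ W \ S, c i = ∑ i ∈ W, c i :=
      Finset.sum_inter_add_sum_sdiff W S c
    have h2 : ∑ i ∈ S ∩ W, c i + ∑ i ∈ S \ W, c i = ∑ i ∈ S, c i :=
      Finset.sum_inter_add_sum_sdiff S W c
    have h3 : ∑ i ∈ W ∩ S, c i = ∑ i ∈ S ∩ W, c i := by rw [Finset.inter_comm]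
    have h4 : ∑ i ∈ W \ S, c i = ∑ i ∈ W \ S, |c i| := by
      refine Finset.sum_congr rfl fun i hi => ?_
      rw [Finset.mem_sdiff] at hi
      exact (abs_of_nonneg (hcpos i (hW hi.1) hi.2)).symm
    have h5 : ∑ i ∈ S \ W, c i = -∑ i ∈ S \ W, |c i| := by
      rw [← Finset.sum_neg_distrib]
      refine Finset.sum_congr rfl fun i hi => ?_
      rw [Finset.mem_sdiff] at hi
      rw [abs_of_nonpos (hcneg i hi.1)]; ring
    have := h1
    rw [h4, h3] at this
    linarith [h2, h5, this]
  -- value of the sum over V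
  have hVval : ∑ i ∈ V, c i = if Odd S.card then ∑ i ∈ S, c i
      else ∑ i ∈ S, c i + |c istar| := by
    rw [hV]
    split_ifs with h1 h2
    · rfl
    · rw [Finset.sum_erase_eq_sub h2, abs_of_nonpos (hcneg istar h2)]; ring
    · rw [Finset.sum_insert h2, abs_of_nonneg (hcpos istar histar h2)]; ring
  -- minimality on the c-sum level
  have cmin : ∀ W : Finset (Fin n), W ⊆ supp H j → Odd W.card →
      ∑ i ∈ V, c i ≤ ∑ i ∈ W, c i := by
    intro W hW hWodd
    rw [decomp W hW, hVval]
    have hnn1 : 0 ≤ ∑ i ∈ W \ S, |c i| :=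
      Finset.sum_nonneg fun i _ => abs_nonneg _
    have hnn2 : 0 ≤ ∑ i ∈ S \ W, |c i| :=
      Finset.sum_nonneg fun i _ => abs_nonneg _
    split_ifs with h1
    · linarith
    · -- S even, W odd, so W ≠ S, symmetric difference nonempty
      have hWne : W ≠ S := by
        intro h; rw [h] at hWodd; exact h1 hWodd
      have hex : (W \ S).Nonempty ∨ (S \ W).Nonempty := by
        by_contra hcon
        push_neg at hcon
        rw [
          Finset.sdiff_eq_empty_iff_subset, Finset.sdiff_eq_empty_iff_subset] at hcon
        exact hWne (Finset.Subset.antisymm hcon.1 hcon.2)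
      have hstar : ∀ k ∈ supp H j, |c istar| ≤ |c k| := by
        intro k hk
        rw [habs, habs]
        linarith [hmin k hk]
      rcases hex with ⟨k, hk⟩ | ⟨k, hk⟩
      · have hkN : k ∈ supp H j := hW (Finset.mem_sdiff.mp hk).1
        have := Finset.single_le_sum (f := fun i => |c i|)
          (fun i _ => abs_nonneg _) hk
        linarith [hstar k hkN]
      · have hkN : k ∈ supp H j := hSsub (Finset.mem_sdiff.mp hk).1
        have := Finset.single_le_sum (f := fun i => |c i|)
          (fun i _ => abs_nonneg _) hk
        linarith [hstar k hkN]
  have hmain : ∀ V' : Finset (Fin n), V' ⊆ supp H j → Odd V'.card →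
      LHS H j V u ≤ LHS H j V' u := by
    intro V' hsub hodd
    rw [key V hVsub, key V' hsub]
    linarith [cmin V' hsub hodd]
  refine ⟨hVodd, hmain, ?_, fun h => ⟨V, hVsub, hVodd, h⟩⟩
  rintro ⟨V', hsub, hodd, hlt⟩
  exact lt_of_le_of_lt (hmain V' hsub hodd) hlt
end

section
/- Let H ∈ {0,1}^{m×n}, γ ∈ ℝ^n, and let C be a finite set of pairs (j,V) where j is a row index of H and V ⊆ N(j) has odd cardinality. Suppose u* ∈ ℝ^n is the unique minimizer of γᵀu over the set of u ∈ ℝ^n satisfying the initial box constraints determined by γ together with the parity inequality associated with (j,V) for every (j,V) ∈ C. Then 0 ≤ u*_i ≤ 1 for all i = 1,…,n. -/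
/-- The feasible set of an (M)ALP subproblem: initial box constraints
determined by `γ`, together with the parity inequalities of the pairs in `C`. -/
def feasible {m n : ℕ} (H : Fin m → Fin n → Bool) (γ : Fin n → ℝ)
    (C : Finset (Fin m × Finset (Fin n))) : Set (Fin n → ℝ) :=
  {u | (∀ i, (0 ≤ γ i → 0 ≤ u i) ∧ (γ i < 0 → u i ≤ 1)) ∧
    ∀ p ∈ C, 1 ≤ LHS H p.1 p.2 u}

/-- the unique minimizer of `γᵀu` over the feasible set of an
(M)ALP subproblem satisfies all the box constraints `0 ≤ u_i ≤ 1`. -/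
theorem stmt_7 (m n : ℕ) (H : Fin m → Fin n → Bool) (γ : Fin n → ℝ)
    (C : Finset (Fin m × Finset (Fin n)))
    (hC : ∀ p ∈ C, p.2 ⊆ supp H p.1 ∧ Odd p.2.card)
    (ustar : Fin n → ℝ) (hfeas : ustar ∈ feasible H γ C)
    (huniq : ∀ v ∈ feasible H γ C, v ≠ ustar →
      ∑ i, γ i * ustar i < ∑ i, γ i * v i) :
    ∀ i, 0 ≤ ustar i ∧ ustar i ≤ 1 := by
  classical
  set v : Fin n → ℝ := fun i => max 0 (min 1 (ustar i)) with hv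
  have hv0 : ∀ i, 0 ≤ v i := fun i => le_max_left _ _
  have hv1 : ∀ i, v i ≤ 1 := fun i => max_le zero_le_one (min_le_left _ _)
  have hbox := hfeas.1
  have hpar := hfeas.2
  have hle : ∀ i, 0 ≤ ustar i → v i ≤ ustar i := fun i hi =>
    max_le hi (min_le_right _ _)
  have hge : ∀ i, ustar i ≤ 1 → ustar i ≤ v i := by
    intro i hi
    have h1 : min 1 (ustar i) = ustar i := min_eq_right hi
    simp only [hv, h1]
    exact le_max_right _ _
  have hvfeas : v ∈ feasible H γ C := by
    refine ⟨fun i => ⟨fun _ => hv0 i, fun _ => hv1 i⟩, ?_⟩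
    intro p hp
    have h1 := hpar p hp
    by_cases hA : (∃ i ∈ p.2, ustar i < 0) ∨ ∃ i ∈ supp H p.1 \ p.2, 1 < ustar i
    · rcases hA with ⟨i, hi, hui⟩ | ⟨i, hi, hui⟩
      · have hvi : v i = 0 := by
          have h2 : min 1 (ustar i) = ustar i := min_eq_right (by linarith)
          simp only [hv, h2]
          exact max_eq_left hui.le
        have hs1 : (1 : ℝ) ≤ ∑ i ∈ p.2, (1 - v i) := by
          have := Finset.single_le_sum (f := fun i => 1 - v i)
            (fun i _ => by linarith [hv1 i]) hi
          simpa [hvi] using this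
        have hs2 : (0 : ℝ) ≤ ∑ i ∈ supp H p.1 \ p.2, v i :=
          Finset.sum_nonneg fun i _ => hv0 i
        unfold LHS; linarith
      · have hvi : v i = 1 := by
          have h2 : min 1 (ustar i) = 1 := min_eq_left hui.le
          simp only [hv, h2]
          exact max_eq_right zero_le_one
        have hs1 : (0 : ℝ) ≤ ∑ i ∈ p.2, (1 - v i) :=
          Finset.sum_nonneg fun i _ => by linarith [hv1 i]
        have hs2 : (1 : ℝ) ≤ ∑ i ∈ supp H p.1 \ p.2, v i := by
          have := Finset.single_le_sum (f := fun i => v i)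
            (fun i _ => hv0 i) hi
          simpa [hvi] using this
        unfold LHS; linarith
    · push_neg at hA
      obtain ⟨hA1, hA2⟩ := hA
      refine le_trans h1 ?_
      unfold LHS
      refine add_le_add (Finset.sum_le_sum fun i hi => ?_)
        (Finset.sum_le_sum fun i hi => ?_)
      · have := hle i (hA1 i hi)
        linarith
      · exact hge i (hA2 i hi)
  have hobj : ∑ i, γ i * v i ≤ ∑ i, γ i * ustar i := by
    refine Finset.sum_le_sum fun i _ => ?_
    rcases le_or_gt 0 (γ i) with h | h
    · exact mul_le_mul_of_nonneg_left (hle i ((hbox i).1 h)) h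
    · exact mul_le_mul_of_nonpos_left (hge i ((hbox i).2 h)) h.le
  have hvequ : v = ustar := by
    by_contra hne
    exact absurd hobj (not_le.mpr (huniq v hvfeas hne))
  intro i
  have hi := congrFun hvequ i
  exact ⟨hi ▸ hv0 i, hi ▸ hv1 i⟩
end

section
/- Let I be a finite index set with a_i ∈ ℝ^n and b_i ∈ ℝ for each i ∈ I, let c ∈ ℝ^n, and suppose u* is the unique minimizer of cᵀu over P = {u : a_iᵀu ≤ b_i, i ∈ I}. Let J = {i ∈ I : a_iᵀu* = b_i} be the active set at u*. Let K be a finite family of additional constraints a_kᵀu ≤ b_k, at least one of which is violated at u* (i.e., a_kᵀu* > b_k for some k ∈ K). If u' is any minimizer of cᵀu over P' = {u : a_iᵀu ≤ b_i for all i ∈ J ∪ K}, then cᵀu' > cᵀu*. -/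
/-- let `u*` be the unique minimizer of a linear cost over a
polyhedron `P`, let `J` be the active set at `u*`, and add a finite family `K`
of new constraints, at least one of which is violated at `u*`.  Then any
minimizer `u'` of the cost over the polyhedron `P'` described by the
constraints in `J` together with those in `K` has strictly larger cost than
`u*`. -/
theorem stmt_10 (n : ℕ) (ι : Type) [Fintype ι]
    (a : ι → Fin n → ℝ) (b : ι → ℝ) (c : Fin n → ℝ)
    (P : Set (Fin n → ℝ)) (hP : P = {u | ∀ i, ∑ k, a i k * u k ≤ b i})
    (ustar : Fin n → ℝ) (hmem : ustar ∈ P)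
    (huniq : ∀ v ∈ P, v ≠ ustar → ∑ k, c k * ustar k < ∑ k, c k * v k)
    (J : Set ι) (hJ : J = {i | ∑ k, a i k * ustar k = b i})
    (κ : Type) [Fintype κ] (a' : κ → Fin n → ℝ) (b' : κ → ℝ)
    (hviol : ∃ k : κ, b' k < ∑ i, a' k i * ustar i)
    (P' : Set (Fin n → ℝ))
    (hP' : P' = {u | (∀ i ∈ J, ∑ k, a i k * u k ≤ b i) ∧
      ∀ k : κ, ∑ i, a' k i * u i ≤ b' k})
    (u' : Fin n → ℝ) (hu'mem : u' ∈ P')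
    (hu'min : ∀ v ∈ P', ∑ k, c k * u' k ≤ ∑ k, c k * v k) :
    ∑ k, c k * ustar k < ∑ k, c k * u' k := by
  classical
  subst hP hJ hP'
  simp only [Set.mem_setOf_eq] at hmem hu'mem
  obtain ⟨k0, hk0⟩ := hviol
  have hne : u' ≠ ustar := by
    rintro rfl
    exact absurd (hu'mem.2 k0) (not_le.2 hk0)
  by_contra hcon
  push_neg at hcon
  set d : Fin n → ℝ := fun k => u' k - ustar k with hd
  have hdne : ∃ k, d k ≠ 0 := by
    by_contra h'
    push_neg at h'
    apply hne
    funext k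
    have := h' k
    simp only [d] at this
    linarith
  set A : ι → ℝ := fun i => ∑ k, a i k * d k with hA
  have hAed : ∀ i, A i = ∑ k, a i k * u' k - ∑ k, a i k * ustar k := by
    intro i
    simp only [A, d, mul_sub, Finset.sum_sub_distrib]
  have hAJ : ∀ i, (∑ k, a i k * ustar k = b i) → A i ≤ 0 := by
    intro i hi
    have h1 : ∑ k, a i k * u' k ≤ b i := hu'mem.1 i hi
    have h2 := hAed i
    linarith
  set g : ι → ℝ := fun i => if ∑ k, a i k * ustar k = b i then 1
    else (b i - ∑ k, a i k * ustar k) / (|A i| + 1) with hg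
  set S : Finset ℝ := insert 1 (Finset.univ.image g) with hS
  have hSne : S.Nonempty := ⟨1, Finset.mem_insert_self _ _⟩
  set t := S.min' hSne with ht
  have htg : ∀ i, t ≤ g i := fun i => Finset.min'_le _ _
    (Finset.mem_insert_of_mem (Finset.mem_image_of_mem _ (Finset.mem_univ i)))
  have htpos : 0 < t := by
    rw [ht, Finset.lt_min'_iff]
    intro y hy
    rcases Finset.mem_insert.1 hy with rfl | hy
    · norm_num
    · obtain ⟨i, _, rfl⟩ := Finset.mem_image.1 hy
      by_cases hi : ∑ k, a i k * ustar k = b i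
      · simp [g, hi]
      · have hlt : ∑ k, a i k * ustar k < b i := lt_of_le_of_ne (hmem i) hi
        simp only [g, if_neg hi]
        have h1 : (0:ℝ) < |A i| + 1 := by positivity
        exact div_pos (by linarith) h1
  set v : Fin n → ℝ := fun k => ustar k + t * d k with hv
  have hsum : ∀ i, ∑ k, a i k * v k = ∑ k, a i k * ustar k + t * A i := by
    intro i
    simp only [v, A, mul_add, Finset.sum_add_distrib, Finset.mul_sum]
    congr 1
    apply Finset.sum_congr rfl
    intro k _
    ring
  have hvmem : ∀ i, ∑ k, a i k * v k ≤ b i := by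
    intro i
    rw [hsum i]
    by_cases hi : ∑ k, a i k * ustar k = b i
    · have h1 := hAJ i hi
      nlinarith
    · have hlt : ∑ k, a i k * ustar k < b i := lt_of_le_of_ne (hmem i) hi
      have hgi : t ≤ (b i - ∑ k, a i k * ustar k) / (|A i| + 1) := by
        have := htg i
        simpa [g, hi] using this
      have habs : t * A i ≤ t * |A i| :=
        mul_le_mul_of_nonneg_left (le_abs_self _) htpos.le
      have h2 : t * |A i| ≤ (b i - ∑ k, a i k * ustar k) / (|A i| + 1) * |A i| :=
        mul_le_mul_of_nonneg_right hgi (abs_nonneg _)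
      have h3 : (b i - ∑ k, a i k * ustar k) / (|A i| + 1) * |A i|
          < b i - ∑ k, a i k * ustar k := by
        rw [div_mul_eq_mul_div, div_lt_iff₀ (by positivity)]
        nlinarith [abs_nonneg (A i)]
      linarith
  have hvne : v ≠ ustar := by
    obtain ⟨k, hk⟩ := hdne
    intro hvu
    have := congrFun hvu k
    simp only [v] at this
    have : t * d k = 0 := by linarith
    rcases mul_eq_zero.1 this with h | h
    · exact absurd h (ne_of_gt htpos)
    · exact hk h
  have hkey := huniq v hvmem hvne
  have hcv : ∑ k, c k * v k
      = ∑ k, c k * ustar k + t * (∑ k, c k * u' k - ∑ k, c k * ustar k) := by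
    simp only [v, d, mul_add, mul_sub, Finset.sum_add_distrib,
      Finset.sum_sub_distrib, Finset.mul_sum]
    congr 1
    congr 1 <;> (apply Finset.sum_congr rfl; intro k _; ring)
  rw [hcv] at hkey
  nlinarith
end

section
/- Let H ∈ {0,1}^{m×n} and γ ∈ ℝ^n with γ_i ≠ 0 for all i, and suppose u* is the unique minimizer of γᵀu over the fundamental polytope P(H). Then u* agrees with the hard-decision vector ũ in at least n − m coordinates; equivalently, u* differs from the vector obtained by bit-based hard decisions on γ in at most m coordinates. -/
/-- The hard-decision vector of an LLR vector `γ` with nonzero entries: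
`ũ_i = 0` if `γ_i > 0` and `ũ_i = 1` if `γ_i < 0`. -/
noncomputable def hardDecision {n : ℕ} (γ : Fin n → ℝ) : Fin n → ℝ :=
  fun i => if 0 < γ i then 0 else 1

namespace Stmt12

open Finset

variable {m n : ℕ}

/-- directional derivative of `LHS` along `d`. -/
def ndot (H : Fin m → Fin n → Bool) (j : Fin m) (V : Finset (Fin n)) (d : Fin n → ℝ) : ℝ :=
  ∑ i ∈ supp H j \ V, d i - ∑ i ∈ V, d i

lemma lhs_perturb (H : Fin m → Fin n → Bool) (j : Fin m) (V : Finset (Fin n))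
    (u d : Fin n → ℝ) (c : ℝ) :
    LHS H j V (fun i => u i + c * d i) = LHS H j V u + c * ndot H j V d := by
  have h1 : ∑ i ∈ V, (1 - (u i + c * d i)) = ∑ i ∈ V, (1 - u i) - c * ∑ i ∈ V, d i := by
    rw [Finset.mul_sum, ← Finset.sum_sub_distrib]
    exact Finset.sum_congr rfl (fun i _ => by ring)
  have h2 : ∑ i ∈ supp H j \ V, (u i + c * d i)
      = ∑ i ∈ supp H j \ V, u i + c * ∑ i ∈ supp H j \ V, d i := by
    rw [Finset.mul_sum, ← Finset.sum_add_distrib]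
  simp only [LHS, ndot, h1, h2]; ring

lemma lhs_sum_ite (H : Fin m → Fin n → Bool) (j : Fin m) {V : Finset (Fin n)}
    (hV : V ⊆ supp H j) (u : Fin n → ℝ) :
    LHS H j V u = ∑ i ∈ supp H j, (if i ∈ V then 1 - u i else u i) := by
  classical
  rw [Finset.sum_ite, filter_mem_eq_inter, Finset.inter_eq_right.2 hV, ← Finset.sdiff_eq_filter]
  rfl

lemma ndot_sum_ite (H : Fin m → Fin n → Bool) (j : Fin m) {V : Finset (Fin n)}
    (hV : V ⊆ supp H j) (d : Fin n → ℝ) :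
    ndot H j V d = ∑ i ∈ supp H j, (if i ∈ V then -d i else d i) := by
  classical
  rw [Finset.sum_ite, filter_mem_eq_inter, Finset.inter_eq_right.2 hV, ← Finset.sdiff_eq_filter,
    Finset.sum_neg_distrib]
  unfold ndot; ring

lemma ndot_abs_le (H : Fin m → Fin n → Bool) (j : Fin m) {V : Finset (Fin n)}
    (hV : V ⊆ supp H j) (d : Fin n → ℝ) :
    |ndot H j V d| ≤ ∑ i, |d i| := by
  rw [ndot_sum_ite H j hV]
  calc |∑ i ∈ supp H j, (if i ∈ V then -d i else d i)|
      ≤ ∑ i ∈ supp H j, |if i ∈ V then -d i else d i| := Finset.abs_sum_le_sum_abs _ _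
    _ = ∑ i ∈ supp H j, |d i| := by
        refine Finset.sum_congr rfl (fun i _ => ?_)
        split <;> simp [abs_neg]
    _ ≤ ∑ i, |d i| := Finset.sum_le_sum_of_subset_of_nonneg (subset_univ _)
        (fun i _ _ => abs_nonneg _)


/-- Key perturbation lemma: a direction respecting box constraints (at the
boundary) and non-decreasing on all tight parity constraints can be followed
for some positive ε while staying in the polytope. -/
lemma perturb (H : Fin m → Fin n → Bool) (u : Fin n → ℝ)
    (hfeas : u ∈ fundamentalPolytope H) (d : Fin n → ℝ)
    (hb0 : ∀ i, u i = 0 → 0 ≤ d i) (hb1 : ∀ i, u i = 1 → d i ≤ 0)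
    (ht : ∀ j V, V ⊆ supp H j → Odd V.card → LHS H j V u = 1 → 0 ≤ ndot H j V d) :
    ∃ ε : ℝ, 0 < ε ∧ (fun i => u i + ε * d i) ∈ fundamentalPolytope H := by
  classical
  obtain ⟨hbox, hpar⟩ := hfeas
  set K : ℝ := ∑ i, |d i| + 1 with hK
  have hKpos : 0 < K := by
    have : (0:ℝ) ≤ ∑ i, |d i| := Finset.sum_nonneg (fun i _ => abs_nonneg _)
    linarith
  have hdK : ∀ i, |d i| ≤ K := by
    intro i
    have h1 : |d i| ≤ ∑ k, |d k| :=
      Finset.single_le_sum (f := fun k => |d k|) (fun k _ => abs_nonneg _) (mem_univ i)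
    linarith
  have hndK : ∀ j (V : Finset (Fin n)), V ⊆ supp H j → |ndot H j V d| ≤ K := by
    intro j V hV
    have := ndot_abs_le H j hV d
    linarith
  set S1 : Finset ℝ := (univ.filter (fun i => 0 < u i)).image u with hS1
  set S2 : Finset ℝ := (univ.filter (fun i => u i < 1)).image (fun i => 1 - u i) with hS2
  set PJ : Finset (Fin m × Finset (Fin n)) :=
    univ.filter (fun p => p.2 ⊆ supp H p.1 ∧ Odd p.2.card ∧ LHS H p.1 p.2 u ≠ 1) with hPJ
  set S3 : Finset ℝ := PJ.image (fun p => LHS H p.1 p.2 u - 1) with hS3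
  set T : Finset ℝ := insert (1:ℝ) (S1 ∪ S2 ∪ S3) with hT
  have hTne : T.Nonempty := ⟨1, mem_insert_self _ _⟩
  set δ : ℝ := T.min' hTne with hδ
  have hδle : ∀ x ∈ T, δ ≤ x := fun x hx => Finset.min'_le _ _ hx
  have hδpos : 0 < δ := by
    have hmem : δ ∈ T := T.min'_mem hTne
    rcases Finset.mem_insert.1 hmem with h | h
    · rw [h]; norm_num
    · rcases Finset.mem_union.1 h with h | h
      · rcases Finset.mem_union.1 h with h | h
        · obtain ⟨i, hi, hiu⟩ := Finset.mem_image.1 h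
          have := (Finset.mem_filter.1 hi).2
          rw [← hiu]; exact this
        · obtain ⟨i, hi, hiu⟩ := Finset.mem_image.1 h
          have := (Finset.mem_filter.1 hi).2
          rw [← hiu]; linarith
      · obtain ⟨p, hp, hpu⟩ := Finset.mem_image.1 h
        obtain ⟨_, h1, h2, h3⟩ := Finset.mem_filter.1 hp
        have := hpar p.1 p.2 h1 h2
        rw [← hpu]
        rcases lt_or_eq_of_le this with hlt | heq
        · linarith
        · exact absurd heq.symm h3
  refine ⟨δ / K, div_pos hδpos hKpos, ?_, ?_⟩
  · -- box constraints
    intro i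
    have hεK : δ / K * K = δ := div_mul_cancel₀ _ (ne_of_gt hKpos)
    have habs : |δ / K * d i| ≤ δ := by
      rw [abs_mul, abs_of_pos (div_pos hδpos hKpos)]
      calc δ / K * |d i| ≤ δ / K * K := by
            apply mul_le_mul_of_nonneg_left (hdK i) (le_of_lt (div_pos hδpos hKpos))
        _ = δ := hεK
    constructor
    · rcases eq_or_lt_of_le (hbox i).1 with h | h
      · have hd0 := hb0 i h.symm
        have : 0 ≤ δ / K * d i := mul_nonneg (le_of_lt (div_pos hδpos hKpos)) hd0
        linarith [h]
      · have hmem : u i ∈ T := by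
          rw [hT]
          refine Finset.mem_insert_of_mem (Finset.mem_union_left _ (Finset.mem_union_left _ ?_))
          exact Finset.mem_image.2 ⟨i, Finset.mem_filter.2 ⟨mem_univ _, h⟩, rfl⟩
        have h1 := hδle _ hmem
        have h2 := abs_le.1 habs
        linarith
    · rcases eq_or_lt_of_le (hbox i).2 with h | h
      · have := hb1 i h
        have : δ / K * d i ≤ 0 :=
          mul_nonpos_of_nonneg_of_nonpos (le_of_lt (div_pos hδpos hKpos)) this
        linarith
      · have hmem : 1 - u i ∈ T := by
          rw [hT]
          refine Finset.mem_insert_of_mem (Finset.mem_union_left _ (Finset.mem_union_right _ ?_))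
          exact Finset.mem_image.2 ⟨i, Finset.mem_filter.2 ⟨mem_univ _, h⟩, rfl⟩
        have h1 := hδle _ hmem
        have h2 := abs_le.1 habs
        linarith
  · -- parity constraints
    intro j V hV hodd
    rw [lhs_perturb]
    by_cases h1 : LHS H j V u = 1
    · have h2 := ht j V hV hodd h1
      have : 0 ≤ δ / K * ndot H j V d :=
        mul_nonneg (le_of_lt (div_pos hδpos hKpos)) h2
      rw [h1]; linarith
    · have hmem : LHS H j V u - 1 ∈ T := by
        rw [hT]
        refine Finset.mem_insert_of_mem (Finset.mem_union_right _ ?_)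
        refine Finset.mem_image.2 ⟨(j, V), Finset.mem_filter.2 ⟨mem_univ _, hV, hodd, h1⟩, rfl⟩
      have hge := hδle _ hmem
      have habs : |δ / K * ndot H j V d| ≤ δ := by
        rw [abs_mul, abs_of_pos (div_pos hδpos hKpos)]
        calc δ / K * |ndot H j V d| ≤ δ / K * K :=
              mul_le_mul_of_nonneg_left (hndK j V hV) (le_of_lt (div_pos hδpos hKpos))
          _ = δ := div_mul_cancel₀ _ (ne_of_gt hKpos)
      have h2 := abs_le.1 habs
      linarith


/-- Weight of coordinate `i` in the parity inequality `(j,V)` at `u`. -/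
def wgt (V : Finset (Fin n)) (u : Fin n → ℝ) (i : Fin n) : ℝ :=
  if i ∈ V then 1 - u i else u i

lemma lhs_eq_sum_wgt (H : Fin m → Fin n → Bool) (j : Fin m) {V : Finset (Fin n)}
    (hV : V ⊆ supp H j) (u : Fin n → ℝ) :
    LHS H j V u = ∑ i ∈ supp H j, wgt V u i := lhs_sum_ite H j hV u

lemma wgt_nonneg {V : Finset (Fin n)} {u : Fin n → ℝ} (hbox : ∀ i, 0 ≤ u i ∧ u i ≤ 1)
    (i : Fin n) : 0 ≤ wgt V u i := by
  unfold wgt; split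
  · linarith [(hbox i).2]
  · exact (hbox i).1

/-- Concentration: in a tight constraint, if one weight equals `1`, all other
weights vanish. -/
lemma conc (H : Fin m → Fin n → Bool) (j : Fin m) {V : Finset (Fin n)}
    (hV : V ⊆ supp H j) {u : Fin n → ℝ} (hbox : ∀ i, 0 ≤ u i ∧ u i ≤ 1)
    (h1 : LHS H j V u = 1) {i0 : Fin n} (hi0 : i0 ∈ supp H j)
    (hw : wgt V u i0 = 1) :
    ∀ i ∈ supp H j, i ≠ i0 → wgt V u i = 0 := by
  classical
  have hsum : ∑ i ∈ supp H j, wgt V u i = 1 := by rw [← lhs_eq_sum_wgt H j hV u]; exact h1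
  have herase : ∑ i ∈ (supp H j).erase i0, wgt V u i = 0 := by
    have := Finset.add_sum_erase _ (wgt V u) hi0
    rw [hsum, hw] at this
    linarith
  intro i hi hne
  have := (Finset.sum_eq_zero_iff_of_nonneg
    (fun k _ => wgt_nonneg hbox k)).1 herase i (Finset.mem_erase.2 ⟨hne, hi⟩)
  exact this

/-- Pair lemma: two distinct tight constraints in the same row force all
coordinates outside their symmetric difference to be integral. -/
lemma pair_int (H : Fin m → Fin n → Bool) (j : Fin m) {V V' : Finset (Fin n)}
    (hV : V ⊆ supp H j) (hV' : V' ⊆ supp H j)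
    (ho : Odd V.card) (ho' : Odd V'.card)
    {u : Fin n → ℝ} (hbox : ∀ i, 0 ≤ u i ∧ u i ≤ 1)
    (h1 : LHS H j V u = 1) (h1' : LHS H j V' u = 1) (hne : V ≠ V') :
    ∀ i ∈ supp H j, (i ∈ V → i ∈ V' → u i = 1) ∧ (i ∉ V → i ∉ V' → u i = 0) := by
  classical
  set Δ : Finset (Fin n) := (V \ V') ∪ (V' \ V) with hΔ
  have hΔsub : Δ ⊆ supp H j := by
    intro i hi
    rcases Finset.mem_union.1 hi with h | h
    · exact hV (Finset.mem_sdiff.1 h).1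
    · exact hV' (Finset.mem_sdiff.1 h).1
  have hcard : Δ.card + (V ∩ V').card + (V' ∩ V).card = V.card + V'.card := by
    have h1 := Finset.card_sdiff_add_card_inter V V'
    have h2 := Finset.card_sdiff_add_card_inter V' V
    have hdisj : Disjoint (V \ V') (V' \ V) := by
      apply Finset.disjoint_left.2
      intro a ha ha'
      exact (Finset.mem_sdiff.1 ha').2 (Finset.mem_sdiff.1 ha).1
    rw [hΔ, Finset.card_union_of_disjoint hdisj]
    omega
  have hinter : (V ∩ V').card = (V' ∩ V).card := by rw [Finset.inter_comm]
  have hΔne : Δ.card ≠ 0 := by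
    intro h
    rw [hΔ, Finset.card_eq_zero, Finset.union_eq_empty] at h
    apply hne
    have hsub1 : V ⊆ V' := by rw [← Finset.sdiff_eq_empty_iff_subset]; exact h.1
    have hsub2 : V' ⊆ V := by rw [← Finset.sdiff_eq_empty_iff_subset]; exact h.2
    exact Finset.Subset.antisymm hsub1 hsub2
  have hΔ2 : 2 ≤ Δ.card := by
    obtain ⟨a, ha⟩ := ho
    obtain ⟨b, hb⟩ := ho'
    omega
  -- the combined weight function
  set g : Fin n → ℝ := fun i => wgt V u i + wgt V' u i with hg
  have hgsum : ∑ i ∈ supp H j, g i = 2 := by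
    rw [hg]
    rw [Finset.sum_add_distrib, ← lhs_eq_sum_wgt H j hV u, ← lhs_eq_sum_wgt H j hV' u, h1, h1']
    norm_num
  have hgΔ : ∀ i ∈ Δ, g i = 1 := by
    intro i hi
    rw [hg]
    rcases Finset.mem_union.1 hi with h | h
    · obtain ⟨h1, h2⟩ := Finset.mem_sdiff.1 h
      simp only [wgt, if_pos h1, if_neg h2]; ring
    · obtain ⟨h1, h2⟩ := Finset.mem_sdiff.1 h
      simp only [wgt, if_neg h2, if_pos h1]; ring
  have hsplit : ∑ i ∈ supp H j \ Δ, g i + ∑ i ∈ Δ, g i = ∑ i ∈ supp H j, g i :=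
    Finset.sum_sdiff hΔsub
  have hΔsum : ∑ i ∈ Δ, g i = (Δ.card : ℝ) := by
    rw [Finset.sum_congr rfl hgΔ, Finset.sum_const, nsmul_eq_mul, mul_one]
  have hrest : ∑ i ∈ supp H j \ Δ, g i = 2 - (Δ.card : ℝ) := by
    rw [hgsum, hΔsum] at hsplit; linarith
  have hrest0 : ∑ i ∈ supp H j \ Δ, g i = 0 := by
    have hnn : 0 ≤ ∑ i ∈ supp H j \ Δ, g i :=
      Finset.sum_nonneg (fun i _ => add_nonneg (wgt_nonneg hbox i) (wgt_nonneg hbox i))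
    have : (2:ℝ) ≤ (Δ.card : ℝ) := by exact_mod_cast hΔ2
    linarith
  have hzero : ∀ i ∈ supp H j \ Δ, g i = 0 :=
    (Finset.sum_eq_zero_iff_of_nonneg
      (fun i _ => add_nonneg (wgt_nonneg hbox i) (wgt_nonneg hbox i))).1 hrest0
  intro i hi
  constructor
  · intro hiV hiV'
    have hiΔ : i ∉ Δ := by
      rw [hΔ]
      simp [Finset.mem_union, Finset.mem_sdiff, hiV, hiV']
    have := hzero i (Finset.mem_sdiff.2 ⟨hi, hiΔ⟩)
    rw [hg] at this
    simp only [wgt, if_pos hiV, if_pos hiV'] at this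
    linarith
  · intro hiV hiV'
    have hiΔ : i ∉ Δ := by
      rw [hΔ]
      simp [Finset.mem_union, Finset.mem_sdiff, hiV, hiV']
    have := hzero i (Finset.mem_sdiff.2 ⟨hi, hiΔ⟩)
    rw [hg] at this
    simp only [wgt, if_neg hiV, if_neg hiV'] at this
    linarith

/-- Consequence of the pair lemma: for a direction supported on fractional
coordinates, the `ndot`s of two distinct tight constraints of one row cancel. -/
lemma ndot_cancel (H : Fin m → Fin n → Bool) (j : Fin m) {V V' : Finset (Fin n)}
    (hV : V ⊆ supp H j) (hV' : V' ⊆ supp H j)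
    (ho : Odd V.card) (ho' : Odd V'.card)
    {u : Fin n → ℝ} (hbox : ∀ i, 0 ≤ u i ∧ u i ≤ 1)
    (h1 : LHS H j V u = 1) (h1' : LHS H j V' u = 1) (hne : V ≠ V')
    (d : Fin n → ℝ) (hd : ∀ i, d i ≠ 0 → 0 < u i ∧ u i < 1) :
    ndot H j V d + ndot H j V' d = 0 := by
  classical
  rw [ndot_sum_ite H j hV, ndot_sum_ite H j hV', ← Finset.sum_add_distrib]
  apply Finset.sum_eq_zero
  intro i hi
  by_cases hdi : d i = 0
  · simp [hdi]
  · have hfrac := hd i hdi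
    have hp := pair_int H j hV hV' ho ho' hbox h1 h1' hne i hi
    by_cases hiV : i ∈ V <;> by_cases hiV' : i ∈ V'
    · exact absurd (hp.1 hiV hiV') (by linarith [hfrac.2])
    · simp [hiV, hiV']
    · simp [hiV, hiV']
    · exact absurd (hp.2 hiV hiV') (by linarith [hfrac.1])


lemma ndot_add (H : Fin m → Fin n → Bool) (j : Fin m) (V : Finset (Fin n))
    (x y : Fin n → ℝ) :
    ndot H j V (fun i => x i + y i) = ndot H j V x + ndot H j V y := by
  unfold ndot
  change (∑ i ∈ supp H j \ V, (x i + y i)) - (∑ i ∈ V, (x i + y i)) = _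
  rw [Finset.sum_add_distrib, Finset.sum_add_distrib]; ring

lemma ndot_smul (H : Fin m → Fin n → Bool) (j : Fin m) (V : Finset (Fin n))
    (c : ℝ) (x : Fin n → ℝ) :
    ndot H j V (fun i => c * x i) = c * ndot H j V x := by
  unfold ndot
  change (∑ i ∈ supp H j \ V, c * x i) - (∑ i ∈ V, c * x i) = _
  rw [← Finset.mul_sum, ← Finset.mul_sum]; ring

end Stmt12

open Finset Stmt12 in
/-- the unique minimizer of `γᵀu` over the fundamental polytope
differs from the hard-decision vector of `γ` in at most `m` coordinates. -/
theorem stmt_12 (m n : ℕ) (H : Fin m → Fin n → Bool) (γ : Fin n → ℝ)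
    (hγ : ∀ i, γ i ≠ 0)
    (ustar : Fin n → ℝ) (hfeas : ustar ∈ fundamentalPolytope H)
    (huniq : ∀ v ∈ fundamentalPolytope H, v ≠ ustar →
      ∑ i, γ i * ustar i < ∑ i, γ i * v i) :
    (Finset.univ.filter (fun i => ustar i ≠ hardDecision γ i)).card ≤ m := by
  classical
  have hbox : ∀ i, 0 ≤ ustar i ∧ ustar i ≤ 1 := hfeas.1
  set D : Finset (Fin n) := Finset.univ.filter (fun i => ustar i ≠ hardDecision γ i) with hD
  set O : Finset (Fin n) := D.filter (fun i => ustar i = 0 ∨ ustar i = 1) with hO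
  set Fr : Finset (Fin n) := D.filter (fun i => ¬(ustar i = 0 ∨ ustar i = 1)) with hFr
  have hcards : O.card + Fr.card = D.card :=
    Finset.card_filter_add_card_filter_not (s := D)
      (p := fun i => ustar i = 0 ∨ ustar i = 1)
  have hFrmem : ∀ i ∈ Fr, 0 < ustar i ∧ ustar i < 1 := by
    intro i hi
    obtain ⟨hiD, hni⟩ := Finset.mem_filter.1 hi
    push_neg at hni
    exact ⟨lt_of_le_of_ne (hbox i).1 (Ne.symm hni.1), lt_of_le_of_ne (hbox i).2 hni.2⟩
  have hg0 : ∀ i ∈ D, ustar i = 0 → γ i < 0 := by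
    intro i hi h0
    have hne := (Finset.mem_filter.1 hi).2
    by_contra hpos
    have hlt : 0 < γ i := lt_of_le_of_ne (not_lt.1 hpos) (Ne.symm (hγ i))
    exact hne (by simp [hardDecision, hlt, h0])
  have hg1 : ∀ i ∈ D, ustar i = 1 → 0 < γ i := by
    intro i hi h1'
    have hne := (Finset.mem_filter.1 hi).2
    by_contra hpos
    exact hne (by simp [hardDecision, hpos, h1'])
  ----------------------------------------------------------------
  -- STEP 1 : blocking rows for subsets of O
  ----------------------------------------------------------------
  have blocking : ∀ W : Finset (Fin n), W ⊆ O → W.Nonempty →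
      ∃ (j : Fin m) (i0 : Fin n), i0 ∈ W ∧ W ∩ supp H j = {i0} ∧
        (∀ k ∈ Fr, k ∉ supp H j) := by
    intro W hWO hWne
    have hWD : ∀ i ∈ W, i ∈ D := fun i hi => (Finset.mem_filter.1 (hWO hi)).1
    have hWint : ∀ i ∈ W, ustar i = 0 ∨ ustar i = 1 :=
      fun i hi => (Finset.mem_filter.1 (hWO hi)).2
    set dW : Fin n → ℝ := fun i => if i ∈ W then 1 - 2 * ustar i else 0 with hdW
    have hex : ∃ j V, V ⊆ supp H j ∧ Odd V.card ∧ LHS H j V ustar = 1 ∧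
        ndot H j V dW < 0 := by
      by_contra hno
      push_neg at hno
      obtain ⟨ε, hε, hv⟩ := Stmt12.perturb H ustar hfeas dW
        (fun i h0 => by by_cases hiW : i ∈ W <;> norm_num [hdW, hiW, h0])
        (fun i h1 => by by_cases hiW : i ∈ W <;> norm_num [hdW, hiW, h1])
        (fun j V h1 h2 h3 => hno j V h1 h2 h3)
      obtain ⟨i1, hi1⟩ := hWne
      have hd1 : dW i1 ≠ 0 := by
        rcases hWint i1 hi1 with h | h <;> norm_num [hdW, hi1, h]
      have hvne : (fun i => ustar i + ε * dW i) ≠ ustar := by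
        intro hcontr
        have h3 : ustar i1 + ε * dW i1 = ustar i1 := congrFun hcontr i1
        have h4 : ε * dW i1 = 0 := by linarith
        rcases mul_eq_zero.1 h4 with h | h
        · exact (ne_of_gt hε) h
        · exact hd1 h
      have hobj : ∑ i, γ i * (ustar i + ε * dW i)
          = ∑ i, γ i * ustar i + ε * ∑ i, γ i * dW i := by
        rw [Finset.mul_sum, ← Finset.sum_add_distrib]
        exact Finset.sum_congr rfl fun i _ => by ring
      have hrestr : ∑ i, γ i * dW i = ∑ i ∈ W, γ i * dW i :=
        (Finset.sum_subset (Finset.subset_univ W)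
          (fun x _ hxW => by simp [hdW, hxW])).symm
      have hneg : ∑ i ∈ W, γ i * dW i < 0 := by
        have hterm : ∀ i ∈ W, γ i * dW i < 0 := by
          intro i hi
          rcases hWint i hi with h | h
          · have hg := hg0 i (hWD i hi) h
            have : dW i = 1 := by norm_num [hdW, hi, h]
            rw [this]; linarith
          · have hg := hg1 i (hWD i hi) h
            have : dW i = -1 := by norm_num [hdW, hi, h]
            rw [this]; linarith
        calc ∑ i ∈ W, γ i * dW i < ∑ _i ∈ W, (0:ℝ) :=
              Finset.sum_lt_sum_of_nonempty ⟨i1, hi1⟩ hterm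
          _ = 0 := by simp
      have hlt := huniq _ hv hvne
      rw [hobj, hrestr] at hlt
      nlinarith
    obtain ⟨j, V, hVs, hodd, htight, hndneg⟩ := hex
    have hnd_eq : ndot H j V dW = ∑ i ∈ supp H j ∩ W, (1 - 2 * wgt V ustar i) := by
      rw [ndot_sum_ite H j hVs]
      rw [← Finset.sum_subset (Finset.inter_subset_left)
        (fun x hx hxn => by
          have hxW : x ∉ W := fun hw => hxn (Finset.mem_inter.2 ⟨hx, hw⟩)
          simp [hdW, hxW])]
      apply Finset.sum_congr rfl
      intro i hi
      obtain ⟨hisupp, hiW⟩ := Finset.mem_inter.1 hi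
      rcases hWint i hiW with h | h <;> by_cases hiV : i ∈ V <;>
        simp [hdW, hiW, wgt, hiV, h] <;> ring
    have hexi0 : ∃ i0, i0 ∈ supp H j ∩ W ∧ wgt V ustar i0 = 1 := by
      by_contra hno2
      push_neg at hno2
      have hnn : 0 ≤ ndot H j V dW := by
        rw [hnd_eq]
        apply Finset.sum_nonneg
        intro i hi
        obtain ⟨hisupp, hiW⟩ := Finset.mem_inter.1 hi
        have h01 : wgt V ustar i = 0 ∨ wgt V ustar i = 1 := by
          rcases hWint i hiW with h | h <;> by_cases hiV : i ∈ V <;>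
            simp [wgt, hiV, h]
        rcases h01 with h | h
        · rw [h]; norm_num
        · exact absurd h (hno2 i hi)
      linarith
    obtain ⟨i0, hi0mem, hw1⟩ := hexi0
    obtain ⟨hi0supp, hi0W⟩ := Finset.mem_inter.1 hi0mem
    have hconc := Stmt12.conc H j hVs hbox htight hi0supp hw1
    have hsumval : ndot H j V dW = ((supp H j ∩ W).card : ℝ) - 2 := by
      rw [hnd_eq]
      have hsplit : ∑ i ∈ supp H j ∩ W, (1 - 2 * wgt V ustar i)
          = ∑ _i ∈ supp H j ∩ W, (1:ℝ) - 2 * ∑ i ∈ supp H j ∩ W, wgt V ustar i := by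
        rw [Finset.mul_sum, ← Finset.sum_sub_distrib]
      have hwsum : ∑ i ∈ supp H j ∩ W, wgt V ustar i = 1 := by
        rw [← Finset.add_sum_erase _ _ hi0mem, hw1]
        have hz : ∑ i ∈ (supp H j ∩ W).erase i0, wgt V ustar i = 0 := by
          apply Finset.sum_eq_zero
          intro i hi
          have hine := Finset.ne_of_mem_erase hi
          have hisupp : i ∈ supp H j :=
            (Finset.mem_inter.1 (Finset.mem_of_mem_erase hi)).1
          exact hconc i hisupp hine
        rw [hz]; ring
      rw [hsplit, hwsum, Finset.sum_const, nsmul_eq_mul, mul_one]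
      ring
    have hcard1 : (supp H j ∩ W).card = 1 := by
      rw [hsumval] at hndneg
      have h2 : (supp H j ∩ W).card < 2 := by
        by_contra hge
        push_neg at hge
        have : (2:ℝ) ≤ ((supp H j ∩ W).card : ℝ) := by exact_mod_cast hge
        linarith
      have h0 : 0 < (supp H j ∩ W).card := Finset.card_pos.2 ⟨i0, hi0mem⟩
      omega
    obtain ⟨a, ha⟩ := Finset.card_eq_one.1 hcard1
    have hai0 : a = i0 := by
      have := hi0mem
      rw [ha] at this
      exact (Finset.mem_singleton.1 this).symm
    refine ⟨j, i0, hi0W, by rw [Finset.inter_comm, ha, hai0], ?_⟩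
    intro k hk hksupp
    obtain ⟨hk0, hk1⟩ := hFrmem k hk
    by_cases hki : k = i0
    · subst hki
      rcases hWint k hi0W with h | h <;> linarith
    · have hz := hconc k hksupp hki
      by_cases hkV : k ∈ V
      · simp only [wgt, if_pos hkV] at hz; linarith
      · simp only [wgt, if_neg hkV] at hz; linarith
  ----------------------------------------------------------------
  -- STEP 2 : injection from O into rows avoiding Fr
  ----------------------------------------------------------------
  have buildB : ∀ (N : ℕ) (W : Finset (Fin n)), W.card ≤ N → W ⊆ O →
      ∃ B : Finset (Fin m), B.card = W.card ∧
        (∀ j ∈ B, ∀ k ∈ Fr, k ∉ supp H j) ∧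
        (∀ j ∈ B, (W ∩ supp H j).Nonempty) := by
    intro N
    induction N with
    | zero =>
      intro W hc hWO
      have : W = ∅ := Finset.card_eq_zero.1 (Nat.le_zero.1 hc)
      subst this
      exact ⟨∅, by simp, by simp, by simp⟩
    | succ N ih =>
      intro W hc hWO
      rcases W.eq_empty_or_nonempty with rfl | hne
      · exact ⟨∅, by simp, by simp, by simp⟩
      · obtain ⟨j, i0, hi0W, hWsupp, hFrav⟩ := blocking W hWO hne
        have hcard' : (W.erase i0).card ≤ N := by
          have := Finset.card_erase_of_mem hi0W
          omega
        obtain ⟨B', hB'card, hB'Fr, hB'ne⟩ := ih (W.erase i0) hcard'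
          ((Finset.erase_subset _ _).trans hWO)
        have hjB' : j ∉ B' := by
          intro hj
          obtain ⟨k, hk⟩ := hB'ne j hj
          obtain ⟨hkW, hksupp⟩ := Finset.mem_inter.1 hk
          have hkW' : k ∈ W := Finset.mem_of_mem_erase hkW
          have : k ∈ W ∩ supp H j := Finset.mem_inter.2 ⟨hkW', hksupp⟩
          rw [hWsupp] at this
          exact (Finset.ne_of_mem_erase hkW) (Finset.mem_singleton.1 this)
        have hi0supp : i0 ∈ supp H j := by
          have : i0 ∈ W ∩ supp H j := by rw [hWsupp]; exact Finset.mem_singleton_self i0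
          exact (Finset.mem_inter.1 this).2
        refine ⟨insert j B', ?_, ?_, ?_⟩
        · rw [Finset.card_insert_of_notMem hjB', hB'card,
            Finset.card_erase_of_mem hi0W]
          have : 0 < W.card := Finset.card_pos.2 hne
          omega
        · intro j' hj'
          rcases Finset.mem_insert.1 hj' with rfl | hj'
          · exact hFrav
          · exact hB'Fr j' hj'
        · intro j' hj'
          rcases Finset.mem_insert.1 hj' with rfl | hj'
          · exact ⟨i0, Finset.mem_inter.2 ⟨hi0W, hi0supp⟩⟩
          · obtain ⟨k, hk⟩ := hB'ne j' hj'
            obtain ⟨hkW, hksupp⟩ := Finset.mem_inter.1 hk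
            exact ⟨k, Finset.mem_inter.2 ⟨Finset.mem_of_mem_erase hkW, hksupp⟩⟩
  obtain ⟨B, hBcard, hBFr, _⟩ := buildB O.card O le_rfl Finset.Subset.rfl
  ----------------------------------------------------------------
  -- STEP 3 : dimension count for fractional coordinates
  ----------------------------------------------------------------
  set C : Finset (Fin m) := Finset.univ \ B with hC
  have htRVst : ∃ Vst : Fin m → Finset (Fin n),
      ∀ j, (∃ V, V ⊆ supp H j ∧ Odd V.card ∧ LHS H j V ustar = 1) →
        (Vst j ⊆ supp H j ∧ Odd (Vst j).card ∧ LHS H j (Vst j) ustar = 1) := by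
    refine ⟨fun j => if h : ∃ V, V ⊆ supp H j ∧ Odd V.card ∧ LHS H j V ustar = 1
      then h.choose else ∅, fun j hj => ?_⟩
    simp only [dif_pos hj]
    exact hj.choose_spec
  obtain ⟨Vst, hVst⟩ := htRVst
  set ext : (↥Fr → ℝ) → (Fin n → ℝ) :=
    fun d i => if h : i ∈ Fr then d ⟨i, h⟩ else 0 with hext
  have hext_supp : ∀ d i, ext d i ≠ 0 → i ∈ Fr := by
    intro d i h
    by_cases hi : i ∈ Fr
    · exact hi
    · exact absurd (by simp [hext, hi]) h
  have hext_add : ∀ d d', ext (d + d') = fun i => ext d i + ext d' i := by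
    intro d d'
    funext i
    by_cases hi : i ∈ Fr <;> simp [hext, hi]
  have hext_smul : ∀ (c : ℝ) d, ext (c • d) = fun i => c * ext d i := by
    intro c d
    funext i
    by_cases hi : i ∈ Fr <;> simp [hext, hi]
  set Ψ : (↥Fr → ℝ) →ₗ[ℝ] (↥C → ℝ) :=
    { toFun := fun d jc => ndot H jc.1 (Vst jc.1) (ext d)
      map_add' := by
        intro d d'
        funext jc
        show ndot H jc.1 (Vst jc.1) (ext (d + d'))
          = ndot H jc.1 (Vst jc.1) (ext d) + ndot H jc.1 (Vst jc.1) (ext d')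
        rw [hext_add, ndot_add]
      map_smul' := by
        intro c d
        funext jc
        show ndot H jc.1 (Vst jc.1) (ext (c • d)) = c * ndot H jc.1 (Vst jc.1) (ext d)
        rw [hext_smul, ndot_smul] } with hΨ
  have hinj : Function.Injective Ψ := by
    rw [← LinearMap.ker_eq_bot, LinearMap.ker_eq_bot']
    intro d hd0
    have hd0' : ∀ jc : ↥C, ndot H jc.1 (Vst jc.1) (ext d) = 0 := by
      intro jc
      have := congrFun (LinearMap.mem_ker.1 (by exact hd0 : d ∈ LinearMap.ker Ψ)) jc
      exact this
    have hall : ∀ j V, V ⊆ supp H j → Odd V.card → LHS H j V ustar = 1 →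
        ndot H j V (ext d) = 0 := by
      intro j V hVs hodd htight
      by_cases hjB : j ∈ B
      · have hzero : ∀ i ∈ supp H j, ext d i = 0 := by
          intro i hi
          by_contra hne'
          exact hBFr j hjB i (hext_supp d i hne') hi
        unfold Stmt12.ndot
        rw [Finset.sum_eq_zero (fun i hi => hzero i (Finset.mem_sdiff.1 hi).1),
          Finset.sum_eq_zero (fun i hi => hzero i (hVs hi))]
        ring
      · have hjC : j ∈ C := Finset.mem_sdiff.2 ⟨Finset.mem_univ _, hjB⟩
        obtain ⟨hs1, hs2, hs3⟩ := hVst j ⟨V, hVs, hodd, htight⟩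
        have h0 : ndot H j (Vst j) (ext d) = 0 := hd0' ⟨j, hjC⟩
        by_cases hVeq : V = Vst j
        · rw [hVeq]; exact h0
        · have hc := Stmt12.ndot_cancel H j hVs hs1 hodd hs2 hbox htight hs3 hVeq
            (ext d) (fun i hne' => hFrmem i (hext_supp d i hne'))
          linarith
    by_contra hdne
    have hexk : ∃ k : ↥Fr, d k ≠ 0 := by
      by_contra hk
      push_neg at hk
      exact hdne (funext fun k => hk k)
    obtain ⟨k, hk⟩ := hexk
    have hek : ext d k.1 = d k := by simp [hext]
    have hzint : ∀ i, (ustar i = 0 ∨ ustar i = 1) → ext d i = 0 := by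
      intro i h
      by_contra hne'
      obtain ⟨ha, hb⟩ := hFrmem i (hext_supp d i hne')
      rcases h with h | h <;> rw [h] at ha hb <;> linarith
    obtain ⟨ε1, hε1, hv1⟩ := Stmt12.perturb H ustar hfeas (ext d)
      (fun i h0 => le_of_eq (hzint i (Or.inl h0)).symm)
      (fun i h1 => le_of_eq (hzint i (Or.inr h1)))
      (fun j V a b c => le_of_eq (hall j V a b c).symm)
    obtain ⟨ε2, hε2, hv2⟩ := Stmt12.perturb H ustar hfeas (fun i => -(ext d i))
      (fun i h0 => by simp [hzint i (Or.inl h0)])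
      (fun i h1 => by simp [hzint i (Or.inr h1)])
      (fun j V a b c => by
        have heq : (fun i => -(ext d i)) = fun i => (-1 : ℝ) * ext d i := by
          funext i; ring
        rw [heq, Stmt12.ndot_smul, hall j V a b c]; norm_num)
    have hobj : ∀ (ε : ℝ) (dd : Fin n → ℝ), ∑ i, γ i * (ustar i + ε * dd i)
        = ∑ i, γ i * ustar i + ε * ∑ i, γ i * dd i := by
      intro ε dd
      rw [Finset.mul_sum, ← Finset.sum_add_distrib]
      exact Finset.sum_congr rfl fun i _ => by ring
    have hekne : ext d k.1 ≠ 0 := by rw [hek]; exact hk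
    have hvne1 : (fun i => ustar i + ε1 * ext d i) ≠ ustar := by
      intro hcontr
      have h3 : ustar k.1 + ε1 * ext d k.1 = ustar k.1 := congrFun hcontr k.1
      have h4 : ε1 * ext d k.1 = 0 := by linarith
      rcases mul_eq_zero.1 h4 with h | h
      · exact (ne_of_gt hε1) h
      · exact hekne h
    have hvne2 : (fun i => ustar i + ε2 * -(ext d i)) ≠ ustar := by
      intro hcontr
      have h3 : ustar k.1 + ε2 * -(ext d k.1) = ustar k.1 := congrFun hcontr k.1
      have h4 : ε2 * -(ext d k.1) = 0 := by linarith
      rcases mul_eq_zero.1 h4 with h | h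
      · exact (ne_of_gt hε2) h
      · exact hekne (by linarith)
    have h1 := huniq _ hv1 hvne1
    have h2 := huniq _ hv2 hvne2
    rw [hobj ε1 (ext d)] at h1
    rw [hobj ε2 (fun i => -(ext d i))] at h2
    have hSneg : ∑ i, γ i * -(ext d i) = -∑ i, γ i * ext d i := by
      rw [← Finset.sum_neg_distrib]
      exact Finset.sum_congr rfl fun i _ => by ring
    rw [hSneg] at h2
    have hS1 : 0 < ε1 * ∑ i, γ i * ext d i := by linarith
    have hS2 : 0 < ε2 * -∑ i, γ i * ext d i := by linarith
    have hp1 : 0 < ∑ i, γ i * ext d i := by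
      rcases mul_pos_iff.1 hS1 with ⟨_, h⟩ | ⟨h, _⟩
      · exact h
      · linarith
    have hp2 : 0 < -∑ i, γ i * ext d i := by
      rcases mul_pos_iff.1 hS2 with ⟨_, h⟩ | ⟨h, _⟩
      · exact h
      · linarith
    linarith
  have hcardle : Fr.card ≤ C.card := by
    have h1 := LinearMap.finrank_le_finrank_of_injective hinj
    rwa [Module.finrank_fintype_fun_eq_card, Module.finrank_fintype_fun_eq_card,
      Fintype.card_coe, Fintype.card_coe] at h1
  ----------------------------------------------------------------
  -- STEP 4 : conclusion
  ----------------------------------------------------------------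
  have hBm : B.card ≤ m := by
    calc B.card ≤ (Finset.univ : Finset (Fin m)).card :=
          Finset.card_le_card (Finset.subset_univ B)
      _ = m := by simp
  have hCcard : C.card = m - B.card := by
    rw [hC, Finset.card_sdiff_of_subset (Finset.subset_univ B)]
    simp
  omega
end

section
/- Let H ∈ {0,1}^{m×n}. Every vertex (extreme point) of the fundamental polytope P(H) has at most m fractional entries, i.e., at most m coordinates whose value is not 0 or 1. In particular, every pseudocodeword of LP decoding has at most m fractional entries. -/
open Finset
open scoped symmDiff

namespace Stmt13

noncomputable section

open Classical

variable {m n : ℕ}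

/-- The coefficient of coordinate `x` in the parity sum for `V`. -/
def coefv (V : Finset (Fin n)) (u : Fin n → ℝ) (x : Fin n) : ℝ :=
  if x ∈ V then 1 - u x else u x

lemma LHS_eq_sum (H : Fin m → Fin n → Bool) (j : Fin m) {V : Finset (Fin n)}
    (hV : V ⊆ supp H j) (u : Fin n → ℝ) :
    LHS H j V u = ∑ x ∈ supp H j, coefv V u x := by
  unfold LHS coefv
  rw [Finset.sum_ite]
  congr 1
  · apply Finset.sum_congr _ (fun _ _ => rfl)
    rw [Finset.filter_mem_eq_inter, Finset.inter_eq_right.2 hV]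
  · apply Finset.sum_congr _ (fun _ _ => rfl)
    rw [Finset.sdiff_eq_filter]

lemma coefv_nonneg {V : Finset (Fin n)} {u : Fin n → ℝ} (h0 : ∀ i, 0 ≤ u i ∧ u i ≤ 1)
    (x : Fin n) : 0 ≤ coefv V u x := by
  unfold coefv
  split
  · linarith [(h0 x).2]
  · exact (h0 x).1

lemma card_add_card (s t : Finset (Fin n)) :
    s.card + t.card = (s ∆ t).card + 2 * (s ∩ t).card := by
  have h1 : s ∆ t = (s \ t) ∪ (t \ s) := by
    ext x; simp [Finset.mem_symmDiff]
  have h2 : Disjoint (s \ t) (t \ s) := by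
    apply Finset.disjoint_left.2
    intro a ha hb
    exact (Finset.mem_sdiff.1 ha).2 (Finset.mem_sdiff.1 hb).1
  have h3 := Finset.card_sdiff_add_card_inter s t
  have h4 := Finset.card_sdiff_add_card_inter t s
  rw [Finset.inter_comm t s] at h4
  rw [h1, Finset.card_union_of_disjoint h2]
  omega

lemma coefv_symmDiff_pair {V : Finset (Fin n)} {u : Fin n → ℝ} {i b : Fin n}
    (x : Fin n) :
    coefv (V ∆ {i, b}) u x = if x = i ∨ x = b then 1 - coefv V u x else coefv V u x := by
  unfold coefv
  have hmem : x ∈ V ∆ ({i, b} : Finset (Fin n)) ↔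
      (x ∈ V ∧ ¬(x = i ∨ x = b)) ∨ ((x = i ∨ x = b) ∧ x ∉ V) := by
    rw [Finset.mem_symmDiff]
    simp [Finset.mem_insert, Finset.mem_singleton]
  by_cases hx : x = i ∨ x = b <;> by_cases hxV : x ∈ V <;>
    simp [hmem, hx, hxV]

/-- The swap computation: flipping membership of two distinct coordinates. -/
lemma sum_coefv_symmDiff_pair {V : Finset (Fin n)} {u : Fin n → ℝ} {i b : Fin n}
    (hib : i ≠ b) {N : Finset (Fin n)} (hi : i ∈ N) (hb : b ∈ N) :
    ∑ x ∈ N, coefv (V ∆ {i, b}) u x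
      = ∑ x ∈ N, coefv V u x + (1 - 2 * coefv V u i) + (1 - 2 * coefv V u b) := by
  have hpair : ({i, b} : Finset (Fin n)) ⊆ N := by
    intro x hx
    rcases Finset.mem_insert.1 hx with h | h
    · rwa [h]
    · rw [Finset.mem_singleton.1 h]; exact hb
  rw [← Finset.sum_sdiff hpair, ← Finset.sum_sdiff hpair]
  have hsame : ∑ x ∈ N \ {i, b}, coefv (V ∆ {i, b}) u x
      = ∑ x ∈ N \ {i, b}, coefv V u x := by
    apply Finset.sum_congr rfl
    intro x hx
    have hxe : ¬(x = i ∨ x = b) := by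
      have := (Finset.mem_sdiff.1 hx).2
      simp only [Finset.mem_insert, Finset.mem_singleton] at this
      tauto
    rw [coefv_symmDiff_pair, if_neg hxe]
  have hps : ∑ x ∈ ({i, b} : Finset (Fin n)), coefv (V ∆ {i, b}) u x
      = (1 - coefv V u i) + (1 - coefv V u b) := by
    rw [Finset.sum_pair hib, coefv_symmDiff_pair, coefv_symmDiff_pair]
    rw [if_pos (Or.inl rfl), if_pos (Or.inr rfl)]
  rw [hsame, hps, Finset.sum_pair hib]
  ring

lemma symmDiff_pair_subset {V N : Finset (Fin n)} {i b : Fin n}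
    (hV : V ⊆ N) (hi : i ∈ N) (hb : b ∈ N) : V ∆ {i, b} ⊆ N := by
  intro x hx
  rcases Finset.mem_symmDiff.1 hx with ⟨h1, _⟩ | ⟨h1, _⟩
  · exact hV h1
  · rcases Finset.mem_insert.1 h1 with h | h
    · rwa [h]
    · rw [Finset.mem_singleton.1 h]; exact hb

lemma odd_card_symmDiff_pair {V : Finset (Fin n)} {i b : Fin n} (hib : i ≠ b)
    (hV : Odd V.card) : Odd (V ∆ {i, b}).card := by
  have h := card_add_card V {i, b}
  have hc : ({i, b} : Finset (Fin n)).card = 2 := by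
    rw [Finset.card_insert_of_notMem (by simpa using hib), Finset.card_singleton]
  rw [hc] at h
  rw [Nat.odd_iff] at hV ⊢
  omega

/-- Key rigidity lemma: if `V` and `V'` are both tight parity constraints for row `j`,
any coordinate in the symmetric difference forces every fractional coordinate of the
row support to be in the symmetric difference. -/
lemma row_rigidity {H : Fin m → Fin n → Bool} {u : Fin n → ℝ}
    (hu : u ∈ fundamentalPolytope H) (j : Fin m) {V V' : Finset (Fin n)}
    (hVs : V ⊆ supp H j) (hVo : Odd V.card) (hVt : LHS H j V u = 1)
    (hV's : V' ⊆ supp H j) (hV'o : Odd V'.card) (hV't : LHS H j V' u = 1)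
    {i k : Fin n} (hi : i ∈ V ∆ V') (hk : k ∈ supp H j) (hkD : k ∉ V ∆ V')
    (hk0 : u k ≠ 0) (hk1 : u k ≠ 1) : False := by
  obtain ⟨hbounds, hineq⟩ := hu
  set N := supp H j with hN
  have hDsub : V ∆ V' ⊆ N := by
    intro x hx
    rcases Finset.mem_symmDiff.1 hx with ⟨h1, _⟩ | ⟨h1, _⟩
    · exact hVs h1
    · exact hV's h1
  -- the symmetric difference has even cardinality ≥ 2, pick b ≠ i in it
  have hDcard : 1 < (V ∆ V').card := by
    have h := card_add_card V V'
    have h1 : (V ∆ V').card ≠ 0 := by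
      intro h0
      rw [Finset.card_eq_zero] at h0
      rw [h0] at hi
      exact absurd hi (Finset.notMem_empty i)
    rcases hVo with ⟨a, ha⟩
    rcases hV'o with ⟨c, hc⟩
    omega
  obtain ⟨b, hbD, hbi⟩ := Finset.exists_mem_ne hDcard i
  have hiN : i ∈ N := hDsub hi
  have hbN : b ∈ N := hDsub hbD
  have hkb : b ≠ k := fun h => hkD (h ▸ hbD)
  have hki : i ≠ k := fun h => hkD (h ▸ hi)
  have hib : i ≠ b := fun h => hbi (h.symm)
  -- tightness of the swapped constraints
  have swap_ineq : ∀ (W : Finset (Fin n)), W ⊆ N → Odd W.card → LHS H j W u = 1 →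
      coefv W u i + coefv W u b ≤ 1 := by
    intro W hWs hWo hWt
    have hW2s : W ∆ {i, b} ⊆ N := symmDiff_pair_subset hWs hiN hbN
    have hW2o : Odd (W ∆ {i, b}).card := odd_card_symmDiff_pair hib hWo
    have h1 : (1 : ℝ) ≤ LHS H j (W ∆ {i, b}) u := hineq j _ hW2s hW2o
    rw [LHS_eq_sum H j hW2s, sum_coefv_symmDiff_pair hib hiN hbN] at h1
    rw [LHS_eq_sum H j hWs] at hWt
    rw [hWt] at h1
    linarith
  have h1 : coefv V u i + coefv V u b ≤ 1 := swap_ineq V hVs hVo hVt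
  have h2 : coefv V' u i + coefv V' u b ≤ 1 := swap_ineq V' hV's hV'o hV't
  -- on the symmetric difference the coefficients are complementary
  have hcompl : ∀ x, x ∈ V ∆ V' → coefv V' u x = 1 - coefv V u x := by
    intro x hx
    rcases Finset.mem_symmDiff.1 hx with ⟨hx1, hx2⟩ | ⟨hx1, hx2⟩ <;>
      simp [coefv, hx1, hx2]
  have h2' : 1 ≤ coefv V u i + coefv V u b := by
    rw [hcompl i hi, hcompl b hbD] at h2; linarith
  have hck : 0 < coefv V u k := by
    unfold coefv
    split
    · have := (hbounds k).2
      cases lt_or_eq_of_le this with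
      | inl h => linarith
      | inr h => exact absurd h hk1
    · exact lt_of_le_of_ne (hbounds k).1 (Ne.symm hk0)
  have hsub : ({i, b, k} : Finset (Fin n)) ⊆ N := by
    intro x hx
    simp only [Finset.mem_insert, Finset.mem_singleton] at hx
    rcases hx with h | h | h
    · rw [h]; exact hiN
    · rw [h]; exact hbN
    · rw [h]; exact hk
  have hsum3 : ∑ x ∈ ({i, b, k} : Finset (Fin n)), coefv V u x
      = coefv V u i + coefv V u b + coefv V u k := by
    rw [Finset.sum_insert (by simp [hib, hki]), Finset.sum_insert (by simp [hkb]),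
      Finset.sum_singleton]
    ring
  have hle : ∑ x ∈ ({i, b, k} : Finset (Fin n)), coefv V u x ≤ ∑ x ∈ N, coefv V u x :=
    Finset.sum_le_sum_of_subset_of_nonneg hsub (fun x _ _ => coefv_nonneg hbounds x)
  have hsumN : ∑ x ∈ N, coefv V u x = 1 := by
    rw [← LHS_eq_sum H j hVs]; exact hVt
  rw [hsum3] at hle
  linarith

/-- The normal vector of the parity inequality `(j, V)`. -/
def avec (H : Fin m → Fin n → Bool) (j : Fin m) (V : Finset (Fin n)) : Fin n → ℝ :=
  fun x => if x ∈ supp H j then (if x ∈ V then (-1 : ℝ) else 1) else 0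

lemma abs_avec_le_one (H : Fin m → Fin n → Bool) (j : Fin m) (V : Finset (Fin n))
    (x : Fin n) : |avec H j V x| ≤ 1 := by
  unfold avec
  split <;> [skip; simp]
  split <;> simp

lemma LHS_perturb (H : Fin m → Fin n → Bool) (j : Fin m) {V : Finset (Fin n)}
    (hV : V ⊆ supp H j) (u d : Fin n → ℝ) (t : ℝ) :
    LHS H j V (fun x => u x + t * d x)
      = LHS H j V u + t * ∑ x ∈ Finset.univ, avec H j V x * d x := by
  have hzero : ∀ x ∈ (Finset.univ : Finset (Fin n)), x ∉ supp H j →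
      avec H j V x * d x = 0 := by
    intro x _ hx
    unfold avec
    rw [if_neg hx, zero_mul]
  have hsplit : ∑ x ∈ Finset.univ, avec H j V x * d x
      = ∑ x ∈ supp H j \ V, d x - ∑ x ∈ V, d x := by
    rw [← Finset.sum_subset (Finset.subset_univ (supp H j)) hzero]
    rw [← Finset.sum_sdiff hV]
    have e1 : ∑ x ∈ supp H j \ V, avec H j V x * d x = ∑ x ∈ supp H j \ V, d x := by
      apply Finset.sum_congr rfl
      intro x hx
      obtain ⟨hx1, hx2⟩ := Finset.mem_sdiff.1 hx
      unfold avec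
      rw [if_pos hx1, if_neg hx2, one_mul]
    have e2 : ∑ x ∈ V, avec H j V x * d x = ∑ x ∈ V, (- d x) := by
      apply Finset.sum_congr rfl
      intro x hx
      unfold avec
      rw [if_pos (hV hx), if_pos hx]
      ring
    rw [e1, e2, Finset.sum_neg_distrib]
    ring
  have e3 : ∑ x ∈ V, (1 - (u x + t * d x)) = ∑ x ∈ V, (1 - u x) - t * ∑ x ∈ V, d x := by
    rw [Finset.mul_sum, ← Finset.sum_sub_distrib]
    exact Finset.sum_congr rfl (fun x _ => by ring)
  have e4 : ∑ x ∈ supp H j \ V, (u x + t * d x)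
      = ∑ x ∈ supp H j \ V, u x + t * ∑ x ∈ supp H j \ V, d x := by
    rw [Finset.mul_sum, ← Finset.sum_add_distrib]
  unfold LHS
  simp only []
  rw [e3, e4, hsplit]
  ring

end

end Stmt13

/-- every vertex (extreme point) of the fundamental polytope
`P(H)` has at most `m` fractional entries.  In particular, every
pseudocodeword of LP decoding has at most `m` fractional entries. -/
theorem stmt_13 (m n : ℕ) (H : Fin m → Fin n → Bool)
    (u : Fin n → ℝ) (hu : u ∈ Set.extremePoints ℝ (fundamentalPolytope H)) :
    (Finset.univ.filter (fun i => u i ≠ 0 ∧ u i ≠ 1)).card ≤ m := by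
  classical
  by_contra hcon
  push_neg at hcon
  set F := Finset.univ.filter (fun i => u i ≠ 0 ∧ u i ≠ 1) with hF
  obtain ⟨huP, huext⟩ := hu
  obtain ⟨hbounds, hineq⟩ := huP
  have huP : u ∈ fundamentalPolytope H := ⟨hbounds, hineq⟩
  -- tight constraints
  set Tight : Fin m → Finset (Fin n) → Prop :=
    fun j V => V ⊆ supp H j ∧ Odd V.card ∧ LHS H j V u = 1 with hTight
  set Vsel : Fin m → Finset (Fin n) :=
    fun j => if h : ∃ V, Tight j V then h.choose else ∅ with hVseldef
  have hVsel : ∀ j, (∃ V, Tight j V) → Tight j (Vsel j) := by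
    intro j h
    rw [hVseldef]
    simp only [dif_pos h]
    exact h.choose_spec
  set asel : Fin m → Fin n → ℝ := fun j => Stmt13.avec H j (Vsel j) with haseldef
  -- the matrix of selected tight normals restricted to fractional coordinates
  set M : Matrix (Fin m) {x // x ∈ F} ℝ :=
    Matrix.of (fun j x => asel j x.val) with hM
  have hnotinj : ¬ Function.Injective M.mulVecLin := by
    intro hinj
    have hle := LinearMap.finrank_le_finrank_of_injective hinj
    rw [Module.finrank_pi ℝ, Module.finrank_pi ℝ, Fintype.card_coe, Fintype.card_fin] at hle
    omega
  have hker : ∃ g : {x // x ∈ F} → ℝ, g ≠ 0 ∧ M.mulVecLin g = 0 := by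
    rw [← LinearMap.ker_eq_bot] at hnotinj
    obtain ⟨g, hg, hg0⟩ := Submodule.ne_bot_iff _ |>.1 hnotinj
    exact ⟨g, hg0, hg⟩
  obtain ⟨g, hg0, hgker⟩ := hker
  set d : Fin n → ℝ := fun x => if h : x ∈ F then g ⟨x, h⟩ else 0 with hd
  have hdF : ∀ x, x ∉ F → d x = 0 := by
    intro x h
    rw [hd]
    exact dif_neg h
  have hdg : ∀ x : {x // x ∈ F}, d x.val = g x := by
    intro x
    rw [hd]
    simp only [dif_pos x.prop]
  have hd0 : d ≠ 0 := by
    intro h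
    obtain ⟨x, hx⟩ := Function.ne_iff.1 hg0
    apply hx
    rw [← hdg x, h]
    rfl
  have hker' : ∀ j, ∑ x ∈ Finset.univ, asel j x * d x = 0 := by
    intro j
    have h1 : M.mulVec g j = 0 := by
      have := congrFun hgker j
      rwa [Matrix.mulVecLin_apply] at this
    calc ∑ x ∈ Finset.univ, asel j x * d x
        = ∑ x ∈ F, asel j x * d x := by
          refine (Finset.sum_subset (Finset.subset_univ F) ?_).symm
          intro x _ hx
          rw [hdF x hx, mul_zero]
      _ = ∑ x ∈ F.attach, asel j x.val * d x.val := (Finset.sum_attach F _).symm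
      _ = ∑ x ∈ F.attach, M j x * g x := by
          apply Finset.sum_congr rfl
          intro x _
          rw [hdg x]
          rfl
      _ = M.mulVec g j := by
          rw [Matrix.mulVec, dotProduct, Finset.univ_eq_attach]
      _ = 0 := h1
  -- orthogonality to every tight normal
  have hortho : ∀ j V, Tight j V →
      ∑ x ∈ Finset.univ, Stmt13.avec H j V x * d x = 0 := by
    intro j V hT
    have hex : ∃ W, Tight j W := ⟨V, hT⟩
    have hsel : Tight j (Vsel j) := hVsel j hex
    by_cases hD : V ∆ Vsel j = ∅
    · have hVV : V = Vsel j := Finset.symmDiff_eq_empty.1 hD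
      rw [hVV]
      exact hker' j
    · obtain ⟨i0, hi0⟩ := Finset.nonempty_iff_ne_empty.2 hD
      have hptw : ∀ x, Stmt13.avec H j V x * d x = -(asel j x * d x) := by
        intro x
        by_cases hdx : d x = 0
        · rw [hdx]
          ring
        · have hxF : x ∈ F := by
            by_contra hh
            exact hdx (hdF x hh)
          have hxfrac := (Finset.mem_filter.1 hxF).2
          by_cases hxN : x ∈ supp H j
          · have hxD : x ∈ V ∆ Vsel j := by
              by_contra hxD
              exact Stmt13.row_rigidity huP j hT.1 hT.2.1 hT.2.2 hsel.1 hsel.2.1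
                hsel.2.2 hi0 hxN hxD hxfrac.1 hxfrac.2
            rw [haseldef]
            rcases Finset.mem_symmDiff.1 hxD with ⟨h1, h2⟩ | ⟨h1, h2⟩ <;>
              · simp only [Stmt13.avec, if_pos hxN, h1, h2, if_true, if_false]
                ring
          · rw [haseldef]
            simp only [Stmt13.avec, if_neg hxN]
            ring
      rw [Finset.sum_congr rfl (fun x _ => hptw x), Finset.sum_neg_distrib, hker' j,
        neg_zero]
  -- bound on the normals paired with d
  set B : ℝ := 1 + ∑ x ∈ Finset.univ, |d x| with hB
  have hBpos : 0 < B := by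
    have : (0:ℝ) ≤ ∑ x ∈ Finset.univ, |d x| :=
      Finset.sum_nonneg (fun x _ => abs_nonneg _)
    rw [hB]; linarith
  have hdb : ∀ x, |d x| ≤ B := by
    intro x
    have h1 : |d x| ≤ ∑ y ∈ Finset.univ, |d y| :=
      Finset.single_le_sum (fun y _ => abs_nonneg (d y)) (Finset.mem_univ x)
    rw [hB]; linarith
  have hSb : ∀ j (V : Finset (Fin n)),
      |∑ x ∈ Finset.univ, Stmt13.avec H j V x * d x| ≤ B := by
    intro j V
    calc |∑ x ∈ Finset.univ, Stmt13.avec H j V x * d x|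
        ≤ ∑ x ∈ Finset.univ, |Stmt13.avec H j V x * d x| :=
          Finset.abs_sum_le_sum_abs _ _
      _ ≤ ∑ x ∈ Finset.univ, |d x| := by
          apply Finset.sum_le_sum
          intro x _
          rw [abs_mul]
          exact mul_le_of_le_one_left (abs_nonneg _) (Stmt13.abs_avec_le_one H j V x)
      _ ≤ B := by rw [hB]; linarith
  -- choose epsilon
  set C : Finset (Fin m × Finset (Fin n)) :=
    Finset.univ.filter (fun p => p.2 ⊆ supp H p.1 ∧ Odd p.2.card ∧ LHS H p.1 p.2 u ≠ 1)
    with hC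
  set T : Finset ℝ := insert 1
    (((C.image fun p => (LHS H p.1 p.2 u - 1) / B) ∪ F.image fun x => u x / B)
      ∪ F.image fun x => (1 - u x) / B) with hT
  have hTne : T.Nonempty := ⟨1, Finset.mem_insert_self _ _⟩
  set ε : ℝ := T.min' hTne with hε
  have hTpos : ∀ r ∈ T, 0 < r := by
    intro r hr
    rw [hT] at hr
    rcases Finset.mem_insert.1 hr with h | h
    · rw [h]; norm_num
    rcases Finset.mem_union.1 h with h | h
    · rcases Finset.mem_union.1 h with h | h
      · obtain ⟨p, hp, rfl⟩ := Finset.mem_image.1 h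
        rw [hC] at hp
        obtain ⟨-, hp1, hp2, hp3⟩ := Finset.mem_filter.1 hp
        have := hineq p.1 p.2 hp1 hp2
        have hlt : 1 < LHS H p.1 p.2 u := lt_of_le_of_ne this (Ne.symm hp3)
        exact div_pos (by linarith) hBpos
      · obtain ⟨x, hx, rfl⟩ := Finset.mem_image.1 h
        have hx2 := (Finset.mem_filter.1 hx).2
        have := (hbounds x).1
        exact div_pos (lt_of_le_of_ne this (Ne.symm hx2.1)) hBpos
    · obtain ⟨x, hx, rfl⟩ := Finset.mem_image.1 h
      have hx2 := (Finset.mem_filter.1 hx).2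
      have := (hbounds x).2
      have : u x < 1 := lt_of_le_of_ne this hx2.2
      exact div_pos (by linarith) hBpos
  have hεpos : 0 < ε := hTpos _ (Finset.min'_mem T hTne)
  -- the perturbed points lie in the polytope
  have hmem : ∀ t : ℝ, |t| ≤ ε → (fun x => u x + t * d x) ∈ fundamentalPolytope H := by
    intro t ht
    have htB : ∀ x, |t * d x| ≤ ε * B := by
      intro x
      rw [abs_mul]
      exact mul_le_mul ht (hdb x) (abs_nonneg _) (le_of_lt hεpos)
    constructor
    · intro x
      by_cases hxF : x ∈ F
      · have h1 : ε * B ≤ u x := by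
          have hmemT : u x / B ∈ T := by
            rw [hT]
            exact Finset.mem_insert_of_mem (Finset.mem_union_left _
              (Finset.mem_union_right _ (Finset.mem_image_of_mem _ hxF)))
          have := Finset.min'_le T _ hmemT
          rw [← hε] at this
          exact (le_div_iff₀ hBpos).1 this
        have h2 : ε * B ≤ 1 - u x := by
          have hmemT : (1 - u x) / B ∈ T := by
            rw [hT]
            exact Finset.mem_insert_of_mem (Finset.mem_union_right _
              (Finset.mem_image_of_mem _ hxF))
          have := Finset.min'_le T _ hmemT
          rw [← hε] at this
          exact (le_div_iff₀ hBpos).1 this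
        have h3 := abs_le.1 (htB x)
        constructor <;> simp only [] <;> linarith [h3.1, h3.2]
      · have hzero : d x = 0 := hdF x hxF
        simp only [hzero, mul_zero, add_zero]
        exact hbounds x
    · intro j V hVs hVo
      rw [Stmt13.LHS_perturb H j hVs u d t]
      by_cases htight : LHS H j V u = 1
      · rw [hortho j V ⟨hVs, hVo, htight⟩, mul_zero, add_zero, htight]
      · have hpC : (j, V) ∈ C := by
          rw [hC]
          exact Finset.mem_filter.2 ⟨Finset.mem_univ _, hVs, hVo, htight⟩
        have hslack : ε * B ≤ LHS H j V u - 1 := by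
          have hmemT : (LHS H j V u - 1) / B ∈ T := by
            rw [hT]
            refine Finset.mem_insert_of_mem (Finset.mem_union_left _
              (Finset.mem_union_left _ ?_))
            exact Finset.mem_image_of_mem _ hpC
          have := Finset.min'_le T _ hmemT
          rw [← hε] at this
          exact (le_div_iff₀ hBpos).1 this
        have hS := hSb j V
        have habs : |t * ∑ x ∈ Finset.univ, Stmt13.avec H j V x * d x| ≤ ε * B := by
          rw [abs_mul]
          exact mul_le_mul ht hS (abs_nonneg _) (le_of_lt hεpos)
        have := abs_le.1 habs
        linarith [this.1]
  -- conclude by extremality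
  have hx1 : (fun x => u x + ε * d x) ∈ fundamentalPolytope H :=
    hmem ε (by rw [abs_of_pos hεpos])
  have hx2 : (fun x => u x + (-ε) * d x) ∈ fundamentalPolytope H :=
    hmem (-ε) (by rw [abs_neg, abs_of_pos hεpos])
  have hseg : u ∈ openSegment ℝ (fun x => u x + ε * d x) (fun x => u x + (-ε) * d x) := by
    refine ⟨1/2, 1/2, by norm_num, by norm_num, by norm_num, ?_⟩
    funext x
    simp only [Pi.add_apply, Pi.smul_apply, smul_eq_mul]
    ring
  have hfix := huext hx1 hx2 hseg
  apply hd0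
  funext x
  have := congrFun hfix x
  replace this : u x + ε * d x = u x := this
  have hεd : ε * d x = 0 := by linarith [this]
  rcases mul_eq_zero.1 hεd with h | h
  · exact absurd h (ne_of_gt hεpos)
  · exact h
end

section
/- Let H ∈ {0,1}^{m×n} and γ ∈ ℝ^n with γ_i ≠ 0 for all i. Suppose u ∈ {0,1}^n is the unique minimizer of γᵀv over the fundamental polytope P(H), and let ũ be the hard-decision vector of γ. Then the set E = {i : u_i ≠ ũ_i} of positions where u and ũ differ does not contain any nonempty stopping set of H. -/
/-- A set `S` of column indices is a stopping set of `H` if no row of `H` has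
exactly one nonzero entry in the columns indexed by `S`. -/
def IsStoppingSet {m n : ℕ} (H : Fin m → Fin n → Bool)
    (S : Finset (Fin n)) : Prop :=
  ∀ j : Fin m, (supp H j ∩ S).card ≠ 1

/-- if a binary vector `u` is the unique minimizer of `γᵀv` over
the fundamental polytope, then the set of positions where `u` differs from
the hard-decision vector of `γ` contains no nonempty stopping set of `H`. -/
theorem stmt_15 (m n : ℕ) (H : Fin m → Fin n → Bool) (γ : Fin n → ℝ)
    (hγ : ∀ i, γ i ≠ 0)
    (u : Fin n → ℝ) (hbin : ∀ i, u i = 0 ∨ u i = 1)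
    (hfeas : u ∈ fundamentalPolytope H)
    (huniq : ∀ v ∈ fundamentalPolytope H, v ≠ u →
      ∑ i, γ i * u i < ∑ i, γ i * v i)
    (E : Finset (Fin n))
    (hE : E = Finset.univ.filter (fun i => u i ≠ hardDecision γ i)) :
    ∀ S ⊆ E, S.Nonempty → ¬ IsStoppingSet H S := by
  intro S hSE hSne hstop
  -- the candidate vector: 1/2 on S, u elsewhere
  set v : Fin n → ℝ := fun i => if i ∈ S then (1/2 : ℝ) else u i with hv
  -- properties of indices in S
  have hSmem : ∀ i ∈ S, u i ≠ hardDecision γ i := by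
    intro i hi
    have := hSE hi
    rw [hE, Finset.mem_filter] at this
    exact this.2
  -- v is feasible
  have hvfeas : v ∈ fundamentalPolytope H := by
    constructor
    · intro i
      by_cases hiS : i ∈ S
      · simp [hv, hiS]; norm_num
      · simp only [hv, if_neg hiS]
        exact hfeas.1 i
    · intro j V hV hodd
      have h01 := hfeas.1
      set D : Finset (Fin n) := supp H j \ V with hD
      have hsum1 : ∑ i ∈ V, (1 - v i)
          = ((V ∩ S).card : ℝ) * (1/2) + ∑ i ∈ V \ S, (1 - u i) := by
        rw [← Finset.sum_inter_add_sum_sdiff V S (fun i => 1 - v i)]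
        congr 1
        · rw [Finset.sum_congr rfl (fun i hi => ?_), Finset.sum_const,
            nsmul_eq_mul]
          have hiS : i ∈ S := (Finset.mem_inter.mp hi).2
          simp [hv, hiS]
          norm_num
        · exact Finset.sum_congr rfl fun i hi => by
            simp [hv, (Finset.mem_sdiff.mp hi).2]
      have hsum2 : ∑ i ∈ D, v i
          = ((D ∩ S).card : ℝ) * (1/2) + ∑ i ∈ D \ S, u i := by
        rw [← Finset.sum_inter_add_sum_sdiff D S v]
        congr 1
        · rw [Finset.sum_congr rfl (fun i hi => ?_), Finset.sum_const,
            nsmul_eq_mul]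
          have hiS : i ∈ S := (Finset.mem_inter.mp hi).2
          simp [hv, hiS]
        · exact Finset.sum_congr rfl fun i hi => by
            simp [hv, (Finset.mem_sdiff.mp hi).2]
      have hcard : (V ∩ S).card + (D ∩ S).card = (supp H j ∩ S).card := by
        rw [← Finset.card_union_of_disjoint]
        · congr 1
          ext i
          simp only [Finset.mem_union, Finset.mem_inter, hD, Finset.mem_sdiff]
          constructor
          · rintro (⟨h1, h2⟩ | ⟨⟨h1, _⟩, h2⟩)
            · exact ⟨hV h1, h2⟩
            · exact ⟨h1, h2⟩
          · rintro ⟨h1, h2⟩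
            by_cases hVi : i ∈ V
            · exact Or.inl ⟨hVi, h2⟩
            · exact Or.inr ⟨⟨h1, hVi⟩, h2⟩
        · exact Finset.disjoint_left.mpr fun i hi hi' => by
            have h1 := (Finset.mem_inter.mp hi).1
            have h2 := ((Finset.mem_sdiff.mp (Finset.mem_inter.mp hi').1)).2
            exact h2 h1
      have hnn1 : (0:ℝ) ≤ ∑ i ∈ V \ S, (1 - u i) :=
        Finset.sum_nonneg fun i _ => by linarith [(h01 i).2]
      have hnn2 : (0:ℝ) ≤ ∑ i ∈ D \ S, u i :=
        Finset.sum_nonneg fun i _ => (h01 i).1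
      show (1:ℝ) ≤ LHS H j V v
      unfold LHS
      rw [← hD, hsum1, hsum2]
      rcases Nat.lt_or_ge (supp H j ∩ S).card 2 with hc | hc
      · -- card = 0 since card ≠ 1 (stopping set)
        interval_cases h : (supp H j ∩ S).card
        · -- intersection empty
          have hempty : supp H j ∩ S = ∅ := Finset.card_eq_zero.mp h
          have hVS : (V ∩ S).card = 0 ∧ (D ∩ S).card = 0 := by
            constructor <;> omega
          have hVSe : V ∩ S = ∅ := Finset.card_eq_zero.mp hVS.1
          have hDSe : D ∩ S = ∅ := Finset.card_eq_zero.mp hVS.2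
          have hVd : V \ S = V := by
            rw [Finset.sdiff_eq_self_iff_disjoint,
              Finset.disjoint_iff_inter_eq_empty]
            exact hVSe
          have hDd : D \ S = D := by
            rw [Finset.sdiff_eq_self_iff_disjoint,
              Finset.disjoint_iff_inter_eq_empty]
            exact hDSe
          rw [hVSe, hDSe, hVd, hDd]
          simp only [Finset.card_empty, Nat.cast_zero, zero_mul, zero_add]
          have := hfeas.2 j V hV hodd
          unfold LHS at this
          rw [← hD] at this
          linarith
        · exact absurd h (hstop j)
      · -- card ≥ 2
        have : (2:ℝ) ≤ ((V ∩ S).card : ℝ) + ((D ∩ S).card : ℝ) := by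
          have : 2 ≤ (V ∩ S).card + (D ∩ S).card := by omega
          exact_mod_cast this
        nlinarith
  -- v ≠ u
  have hvne : v ≠ u := by
    obtain ⟨i, hi⟩ := hSne
    intro heq
    have := congrFun heq i
    simp only [hv, if_pos hi] at this
    rcases hbin i with h | h <;> rw [h] at this <;> norm_num at this
  -- cost of v ≤ cost of u
  have hcost : ∑ i, γ i * v i ≤ ∑ i, γ i * u i := by
    apply Finset.sum_le_sum
    intro i _
    by_cases hiS : i ∈ S
    · have hne := hSmem i hiS
      unfold hardDecision at hne
      simp only [hv, if_pos hiS]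
      rcases lt_or_gt_of_ne (hγ i) with hneg | hpos
      · -- γ i < 0, hard decision = 1, so u i = 0
        rw [if_neg (by linarith)] at hne
        have hu0 : u i = 0 := by
          rcases hbin i with h | h
          · exact h
          · exact absurd h hne
        rw [hu0]
        nlinarith
      · -- γ i > 0, hard decision = 0, so u i = 1
        rw [if_pos hpos] at hne
        have hu1 : u i = 1 := by
          rcases hbin i with h | h
          · exact absurd h hne
          · exact h
        rw [hu1]
        nlinarith
    · simp [hv, hiS]
  have := huniq v hvfeas hvne
  linarith
end

section
/- Let H ∈ {0,1}^{m×n} and γ ∈ ℝ^n with γ_i ≠ 0 for all i. Let C be a finite set of pairs (j,V) where j is a row index of H and V ⊆ N(j) has odd cardinality, and suppose u* is the unique minimizer of γᵀu over the set of u satisfying the initial box constraints determined by γ together with the parity inequality associated with (j,V) for every (j,V) ∈ C. Then the number of coordinates i with u*_i ≠ ũ_i is at most the number of elements of C whose parity inequality is active at u*; in particular, it is at most |C|. -/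
noncomputable def coeff {m n : ℕ} (H : Fin m → Fin n → Bool)
    (p : Fin m × Finset (Fin n)) (i : Fin n) : ℝ :=
  if i ∈ supp H p.1 \ p.2 then 1 else if i ∈ p.2 then (-1) else 0

lemma abs_coeff_le {m n : ℕ} (H : Fin m → Fin n → Bool)
    (p : Fin m × Finset (Fin n)) (i : Fin n) : |coeff H p i| ≤ 1 := by
  unfold coeff; split_ifs <;> simp

lemma sum_ite_mem' {α : Type*} [Fintype α] [DecidableEq α] (s : Finset α) (w : α → ℝ) :
    (∑ x : α, if x ∈ s then w x else 0) = ∑ x ∈ s, w x := by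
  rw [← Finset.sum_subset (Finset.subset_univ s) (fun x _ hx => if_neg hx)]
  exact Finset.sum_congr rfl (fun x hx => if_pos hx)

lemma sum_coeff_mul {m n : ℕ} (H : Fin m → Fin n → Bool)
    (p : Fin m × Finset (Fin n)) (w : Fin n → ℝ) :
    ∑ i, coeff H p i * w i
      = ∑ i ∈ supp H p.1 \ p.2, w i - ∑ i ∈ p.2, w i := by
  have h : ∀ i, coeff H p i * w i
      = (if i ∈ supp H p.1 \ p.2 then w i else 0) - (if i ∈ p.2 then w i else 0) := by
    intro i
    unfold coeff
    by_cases h1 : i ∈ supp H p.1 \ p.2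
    · have : i ∉ p.2 := (Finset.mem_sdiff.mp h1).2
      simp [h1, this]
    · by_cases h2 : i ∈ p.2 <;> simp [h1, h2]
  simp only [h]
  rw [Finset.sum_sub_distrib]
  congr 1 <;> exact sum_ite_mem' _ _

lemma LHS_add {m n : ℕ} (H : Fin m → Fin n → Bool)
    (p : Fin m × Finset (Fin n)) (u w : Fin n → ℝ) :
    LHS H p.1 p.2 (fun i => u i + w i)
      = LHS H p.1 p.2 u + ∑ i, coeff H p i * w i := by
  rw [sum_coeff_mul]
  unfold LHS
  rw [show (∑ i ∈ p.2, (1 - (u i + w i))) = ∑ i ∈ p.2, ((1 - u i) - w i) by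
    apply Finset.sum_congr rfl; intros; ring]
  rw [Finset.sum_sub_distrib, Finset.sum_add_distrib]
  ring

/-- the number of coordinates where the unique minimizer `u*` of
an (M)ALP subproblem differs from the hard-decision vector of `γ` is at most
the number of parity inequalities of the subproblem active at `u*`; in
particular, at most `|C|`. -/
theorem stmt_17 (m n : ℕ) (H : Fin m → Fin n → Bool) (γ : Fin n → ℝ)
    (hγ : ∀ i, γ i ≠ 0)
    (C : Finset (Fin m × Finset (Fin n)))
    (hC : ∀ p ∈ C, p.2 ⊆ supp H p.1 ∧ Odd p.2.card)
    (ustar : Fin n → ℝ) (hfeas : ustar ∈ feasible H γ C)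
    (huniq : ∀ v ∈ feasible H γ C, v ≠ ustar →
      ∑ i, γ i * ustar i < ∑ i, γ i * v i) :
    (Finset.univ.filter (fun i => ustar i ≠ hardDecision γ i)).card ≤
        (C.filter (fun p => LHS H p.1 p.2 ustar = 1)).card ∧
      (Finset.univ.filter (fun i => ustar i ≠ hardDecision γ i)).card ≤
        C.card := by
  classical
  obtain ⟨hbox, hpar⟩ := hfeas
  set D := Finset.univ.filter (fun i => ustar i ≠ hardDecision γ i) with hDdef
  set A := C.filter (fun p => LHS H p.1 p.2 ustar = 1) with hAdef
  suffices h : D.card ≤ A.card by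
    exact ⟨h, h.trans (Finset.card_le_card (Finset.filter_subset _ _))⟩
  by_contra hlt
  push_neg at hlt
  -- linear map from perturbations on D to changes of active constraints
  let f : ({i // i ∈ D} → ℝ) →ₗ[ℝ] ({p // p ∈ A} → ℝ) :=
    { toFun := fun x q => ∑ i : {i // i ∈ D}, coeff H q.1 i.1 * x i
      map_add' := by
        intro x y; funext q; simp [mul_add, Finset.sum_add_distrib]
      map_smul' := by
        intro c x; funext q
        simp only [Pi.smul_apply, smul_eq_mul, RingHom.id_apply, Finset.mul_sum]
        exact Finset.sum_congr rfl (fun i _ => by ring) }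
  have hninj : ¬ Function.Injective f := by
    intro hinj
    have hle := LinearMap.finrank_le_finrank_of_injective hinj
    rw [Module.finrank_fintype_fun_eq_card, Module.finrank_fintype_fun_eq_card,
      Fintype.card_coe, Fintype.card_coe] at hle
    omega
  obtain ⟨x, y, hfxy, hxy⟩ := Function.not_injective_iff.mp hninj
  set z : {i // i ∈ D} → ℝ := x - y with hzdef
  have hz0 : f z = 0 := by rw [hzdef, map_sub, hfxy, sub_self]
  have hzne : z ≠ 0 := sub_ne_zero.mpr hxy
  -- the direction d
  set d : Fin n → ℝ := fun i => if h : i ∈ D then z ⟨i, h⟩ else 0 with hddef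
  obtain ⟨i₀, hi₀⟩ := Function.ne_iff.mp hzne
  have hdi₀ : d i₀.1 ≠ 0 := by
    rw [hddef]; simpa [dif_pos i₀.2] using hi₀
  set B : ℝ := ∑ i, |d i| with hBdef
  have hdB : ∀ i, |d i| ≤ B := by
    intro i
    exact Finset.single_le_sum (f := fun i => |d i|) (fun j _ => abs_nonneg _)
      (Finset.mem_univ i)
  have hB : 0 < B := lt_of_lt_of_le (abs_pos.mpr hdi₀) (hdB i₀.1)
  -- active constraints are unchanged along d
  have hact : ∀ p ∈ A, ∑ i, coeff H p i * d i = 0 := by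
    intro p hp
    have h1 : ∑ i, coeff H p i * d i = ∑ i ∈ D, coeff H p i * d i := by
      refine (Finset.sum_subset (Finset.subset_univ D) ?_).symm
      intro i _ hi
      rw [hddef]; simp [dif_neg hi]
    have h2 : ∑ i ∈ D, coeff H p i * d i
        = ∑ i ∈ D.attach, coeff H p i.1 * z i := by
      rw [← Finset.sum_attach D (fun i => coeff H p i * d i)]
      refine Finset.sum_congr rfl (fun i _ => ?_)
      rw [hddef]; simp [dif_pos i.2]
    have h3 : ∑ i ∈ D.attach, coeff H p i.1 * z i = f z ⟨p, hp⟩ := by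
      show _ = ∑ i : {i // i ∈ D}, coeff H p i.1 * z i
      rw [Finset.univ_eq_attach]
    rw [h1, h2, h3, hz0]; rfl
  -- choice of ε
  set T : Finset ℝ := insert 1
      (((C \ A).image (fun p => (LHS H p.1 p.2 ustar - 1) / B)) ∪
        D.image (fun i => if 0 < γ i then ustar i / B else (1 - ustar i) / B))
    with hTdef
  have hTne : T.Nonempty := ⟨1, Finset.mem_insert_self _ _⟩
  set ε : ℝ := T.min' hTne with hεdef
  have hslack : ∀ p ∈ C, p ∉ A → 1 < LHS H p.1 p.2 ustar := by
    intro p hp hpa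
    refine lt_of_le_of_ne (hpar p hp) ?_
    intro heq
    exact hpa (Finset.mem_filter.mpr ⟨hp, heq.symm⟩)
  have hDchar : ∀ i ∈ D, (0 < γ i ∧ 0 < ustar i) ∨ (γ i < 0 ∧ ustar i < 1) := by
    intro i hi
    have hne : ustar i ≠ hardDecision γ i := (Finset.mem_filter.mp hi).2
    rcases lt_or_gt_of_ne (hγ i) with hg | hg
    · right
      refine ⟨hg, lt_of_le_of_ne ((hbox i).2 hg) ?_⟩
      intro h; apply hne; rw [h, hardDecision, if_neg (not_lt.mpr hg.le)]
    · left
      refine ⟨hg, lt_of_le_of_ne ((hbox i).1 hg.le) ?_⟩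
      intro h; apply hne; rw [← h, hardDecision, if_pos hg]
  have hTpos : ∀ t ∈ T, 0 < t := by
    intro t ht
    rw [hTdef] at ht
    rcases Finset.mem_insert.mp ht with rfl | ht
    · norm_num
    rcases Finset.mem_union.mp ht with ht | ht
    · obtain ⟨p, hp, rfl⟩ := Finset.mem_image.mp ht
      obtain ⟨hpC, hpA⟩ := Finset.mem_sdiff.mp hp
      exact div_pos (by linarith [hslack p hpC hpA]) hB
    · obtain ⟨i, hi, rfl⟩ := Finset.mem_image.mp ht
      rcases hDchar i hi with ⟨hg, hu⟩ | ⟨hg, hu⟩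
      · rw [if_pos hg]; exact div_pos hu hB
      · rw [if_neg (not_lt.mpr hg.le)]; exact div_pos (by linarith) hB
  have hε : 0 < ε := hTpos _ (T.min'_mem hTne)
  have hεle : ∀ t ∈ T, ε ≤ t := fun t ht => T.min'_le t ht
  -- feasibility of the two perturbed points
  have hsumabs : ∀ p : Fin m × Finset (Fin n), |∑ i, coeff H p i * d i| ≤ B := by
    intro p
    calc |∑ i, coeff H p i * d i| ≤ ∑ i, |coeff H p i * d i| :=
          Finset.abs_sum_le_sum_abs _ _
      _ ≤ ∑ i, |d i| := by
          refine Finset.sum_le_sum (fun i _ => ?_)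
          rw [abs_mul]
          calc |coeff H p i| * |d i| ≤ 1 * |d i| :=
                mul_le_mul_of_nonneg_right (abs_coeff_le H p i) (abs_nonneg _)
            _ = |d i| := one_mul _
      _ = B := rfl
  have hfeas' : ∀ σ : ℝ, σ = 1 ∨ σ = -1 →
      (fun i => ustar i + σ * ε * d i) ∈ feasible H γ C := by
    intro σ hσ
    have hσabs : |σ| = 1 := by rcases hσ with rfl | rfl <;> norm_num
    constructor
    · intro i
      show (0 ≤ γ i → 0 ≤ ustar i + σ * ε * d i) ∧ (γ i < 0 → ustar i + σ * ε * d i ≤ 1)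
      by_cases hi : i ∈ D
      · have habs : |σ * ε * d i| ≤ ε * B := by
          rw [abs_mul, abs_mul, hσabs, one_mul, abs_of_pos hε]
          exact mul_le_mul_of_nonneg_left (hdB i) hε.le
        have habs' := abs_le.mp habs
        rcases hDchar i hi with ⟨hg, hu⟩ | ⟨hg, hu⟩
        · constructor
          · intro _
            have hmem : ustar i / B ∈ T := by
              rw [hTdef]
              refine Finset.mem_insert_of_mem (Finset.mem_union_right _ ?_)
              refine Finset.mem_image.mpr ⟨i, hi, ?_⟩
              rw [if_pos hg]
            have h1 : ε ≤ ustar i / B := hεle _ hmem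
            have h2 : ε * B ≤ ustar i := (le_div_iff₀ hB).mp h1
            linarith [habs'.1]
          · intro hg'; exact absurd hg (not_lt.mpr hg'.le)
        · constructor
          · intro hg'; exact absurd hg (not_lt.mpr hg')
          · intro _
            have hmem : (1 - ustar i) / B ∈ T := by
              rw [hTdef]
              refine Finset.mem_insert_of_mem (Finset.mem_union_right _ ?_)
              refine Finset.mem_image.mpr ⟨i, hi, ?_⟩
              rw [if_neg (not_lt.mpr hg.le)]
            have h1 : ε ≤ (1 - ustar i) / B := hεle _ hmem
            have h2 : ε * B ≤ 1 - ustar i := (le_div_iff₀ hB).mp h1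
            linarith [habs'.2]
      · have : d i = 0 := by rw [hddef]; simp [dif_neg hi]
        rw [this, mul_zero, add_zero]
        exact hbox i
    · intro p hp
      rw [LHS_add H p ustar (fun i => σ * ε * d i)]
      have hpull : ∑ i, coeff H p i * (σ * ε * d i)
          = σ * ε * ∑ i, coeff H p i * d i := by
        rw [Finset.mul_sum]
        exact Finset.sum_congr rfl (fun i _ => by ring)
      rw [hpull]
      by_cases hpA : p ∈ A
      · rw [hact p hpA, mul_zero, add_zero]
        exact hpar p hp
      · have h1 : 1 < LHS H p.1 p.2 ustar := hslack p hp hpA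
        have hmem : (LHS H p.1 p.2 ustar - 1) / B ∈ T := by
          rw [hTdef]
          refine Finset.mem_insert_of_mem (Finset.mem_union_left _ ?_)
          exact Finset.mem_image.mpr ⟨p, Finset.mem_sdiff.mpr ⟨hp, hpA⟩, rfl⟩
        have h2 : ε * B ≤ LHS H p.1 p.2 ustar - 1 := (le_div_iff₀ hB).mp (hεle _ hmem)
        have h3 : |σ * ε * ∑ i, coeff H p i * d i| ≤ ε * B := by
          rw [abs_mul, abs_mul, hσabs, one_mul, abs_of_pos hε]
          exact mul_le_mul_of_nonneg_left (hsumabs p) hε.le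
        have h4 := (abs_le.mp h3).1
        linarith
  -- derive the contradiction
  have hne : ∀ σ : ℝ, σ = 1 ∨ σ = -1 →
      (fun i => ustar i + σ * ε * d i) ≠ ustar := by
    intro σ hσ heq
    have := congrFun heq i₀.1
    change ustar i₀.1 + σ * ε * d i₀.1 = ustar i₀.1 at this
    have hσ0 : σ ≠ 0 := by rcases hσ with rfl | rfl <;> norm_num
    have : σ * ε * d i₀.1 = 0 := by linarith
    rcases mul_eq_zero.mp this with h | h
    · rcases mul_eq_zero.mp h with h | h
      · exact hσ0 h
      · exact hε.ne' h
    · exact hdi₀ h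
  have hobj : ∀ σ : ℝ, σ = 1 ∨ σ = -1 →
      0 < σ * ε * ∑ i, γ i * d i := by
    intro σ hσ
    have h := huniq _ (hfeas' σ hσ) (hne σ hσ)
    have hsum : ∑ i, γ i * (ustar i + σ * ε * d i)
        = ∑ i, γ i * ustar i + σ * ε * ∑ i, γ i * d i := by
      rw [Finset.mul_sum, ← Finset.sum_add_distrib]
      exact Finset.sum_congr rfl (fun i _ => by ring)
    rw [hsum] at h
    linarith
  have h1 := hobj 1 (Or.inl rfl)
  have h2 := hobj (-1) (Or.inr rfl)
  nlinarith
end
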